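/- arXiv:1805.07261 — 2 statements merged into one kernel-verified Lean document; each statement's English description precedes it below -/
import Mathlib

section
/- Let λ be a partition and k a strictly positive integer. In the ring of symmetric functions, k · (∂/∂p_k) s_λ = Σ_{μ: μ→_k λ} (−1)^{ht(λ∖μ)} s_μ, where the sum is over all partitions μ such that λ∖μ is a k-ribbon. -/
open scoped BigOperators
open MeasureTheory

noncomputable section

namespace RMT

attribute [local instance] Classical.propDecidable

/-! ### Sequences of complex numbers -/

/-- `e(X)`, the product of all elements of the sequence `X`. -/
def listProd (X : List ℂ) : ℂ := X.prod

/-- `-X`, the sequence of negatives. -/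
def negL (X : List ℂ) : List ℂ := X.map (fun z => -z)

/-- `X⁻¹`, the sequence of inverses. -/
def invL (X : List ℂ) : List ℂ := X.map (fun z => z⁻¹)

/-- `abs(X)`, the sequence of absolute values (as complex numbers). -/
def absL (X : List ℂ) : List ℂ := X.map (fun z => ((‖z‖ : ℝ) : ℂ))

/-- `Δ(X; Y) = ∏_{x ∈ X, y ∈ Y} (x - y)`. -/
def pairDelta (X Y : List ℂ) : ℂ := (X.map (fun x => (Y.map (fun y => x - y)).prod)).prod

/-- The power sum `p_k(X) = ∑_{x ∈ X} x^k`. -/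
def pSym (k : ℕ) (X : List ℂ) : ℂ := (X.map (fun z => z ^ k)).sum

/-- `p_λ(X) = ∏_i p_{λ_i}(X)` for a multiset of parts. -/
def pMult (p : Multiset ℕ) (X : List ℂ) : ℂ := (p.map (fun k => pSym k X)).prod

/-- The complete homogeneous symmetric polynomial `h_k(X)`. -/
def hSym (k : ℕ) (X : List ℂ) : ℂ :=
  ∑ α ∈ (Finset.univ : Finset (Fin X.length → Fin (k + 1))).filter
      (fun α => (∑ i, ((α i : ℕ))) = k),
    ∏ i, X.get i ^ ((α i : ℕ))

/-- `h_k(X)` for integer `k`, vanishing for negative `k`. -/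
def hSymZ (k : ℤ) (X : List ℂ) : ℂ := if 0 ≤ k then hSym k.toNat X else 0

/-- The monomial symmetric polynomial `m_λ(X)`, where `λ` is given as the multiset of
its parts: the sum of `x_1^{α_1} ⋯ x_n^{α_n}` over all distinct rearrangements `α` of `λ`
(with zero parts removed) padded with zeros to length `n = l(X)`; it vanishes when `λ` has more
positive parts than `l(X)`. -/
def mSym (p : Multiset ℕ) (X : List ℂ) : ℂ :=
  ∑ α ∈ (Finset.univ : Finset (Fin X.length → Fin (p.sum + 1))).filter
      (fun α => (Finset.univ.val.map (fun i => ((α i : ℕ)))) =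
        (p.filter (fun x => x ≠ 0)) +
          Multiset.replicate (X.length - (p.filter (fun x => x ≠ 0)).card) 0),
    ∏ i, X.get i ^ ((α i : ℕ))

/-! ### Partitions, modelled as Young diagrams -/

/-- The multiset of (positive) parts of a partition. -/
def parts (l : YoungDiagram) : Multiset ℕ := (l.rowLens : Multiset ℕ)

/-- `l(λ)`, the number of positive parts. -/
def plen (l : YoungDiagram) : ℕ := l.colLen 0

/-- `|λ|`, the size of the partition. -/
def psize (l : YoungDiagram) : ℕ := l.cells.card

/-- `m_i(λ)`, the number of parts equal to `i`. -/
def multOf (l : YoungDiagram) (i : ℕ) : ℕ := (parts l).count i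

/-- `z_λ = ∏_{i ≥ 1} i^{m_i(λ)} m_i(λ)!`. -/
def zPart (l : YoungDiagram) : ℕ :=
  ∏ i ∈ (parts l).toFinset, i ^ multOf l i * (multOf l i).factorial

/-- The parts of `λ - ⟨1^{l(λ)}⟩`, i.e. of `λ` with 1 subtracted from every (positive) part. -/
def partsMinusOne (l : YoungDiagram) : Multiset ℕ := (parts l).map (fun a => a - 1)

/-- The Schur polynomial attached to a list of (integer) parts, via the Jacobi–Trudi
determinant; this is the polynomial extension of the bialternant `det(x_i^{λ_j+n-j})/Δ(X)`. -/
def schurL (p : List ℤ) (X : List ℂ) : ℂ :=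
  Matrix.det (Matrix.of (fun i j : Fin p.length => hSymZ (p.get i + (j : ℤ) - (i : ℤ)) X))

/-- The Schur polynomial `s_λ(X)` of a partition. -/
def schur (l : YoungDiagram) (X : List ℂ) : ℂ :=
  schurL (l.rowLens.map (fun a => (a : ℤ))) X

/-! ### Ribbons -/

/-- Two boxes are edgewise adjacent. -/
def adjCell (c d : ℕ × ℕ) : Prop :=
  (c.1 = d.1 ∧ (c.2 = d.2 + 1 ∨ d.2 = c.2 + 1)) ∨
    (c.2 = d.2 ∧ (c.1 = d.1 + 1 ∨ d.1 = c.1 + 1))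

/-- A finite set of boxes is edgewise connected. -/
def ConnCells (s : Finset (ℕ × ℕ)) : Prop :=
  ∀ c ∈ s, ∀ d ∈ s, Relation.ReflTransGen (fun a b => a ∈ s ∧ b ∈ s ∧ adjCell a b) c d

/-- `IsRibbon μ λ k` says that `μ ⊆ λ` and the skew diagram `λ ∖ μ` is a `k`-ribbon:
it has `k` boxes, is edgewise connected, and contains no 2×2 block of boxes.
(This is the relation written `μ →_k λ`.) -/
def IsRibbon (μ l : YoungDiagram) (k : ℕ) : Prop :=
  μ ≤ l ∧ (l.cells \ μ.cells).card = k ∧ ConnCells (l.cells \ μ.cells) ∧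
    ¬ ∃ i j : ℕ, ((i, j) ∈ l.cells \ μ.cells ∧ (i + 1, j) ∈ l.cells \ μ.cells ∧
      (i, j + 1) ∈ l.cells \ μ.cells ∧ (i + 1, j + 1) ∈ l.cells \ μ.cells)

/-- The height of the skew diagram `λ ∖ μ`: one less than the number of rows it occupies. -/
def ribbonHeight (μ l : YoungDiagram) : ℕ := ((l.cells \ μ.cells).image Prod.fst).card - 1

/-- The rectangular partition `⟨m^n⟩` (n rows of length m). -/
def rect (m n : ℕ) : YoungDiagram :=
  ⟨Finset.range n ×ˢ Finset.range m, by
    intro a b hba ha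
    simp only [Finset.coe_product, Set.mem_prod, Finset.mem_coe, Finset.mem_range] at *
    exact ⟨lt_of_le_of_lt hba.1 ha.1, lt_of_le_of_lt hba.2 ha.2⟩⟩

/-- `HasMNIndex λ m n k` says that the `(m,n)`-index of the partition `λ` is `k`: `k` is the
largest (possibly negative) integer with `k ≤ min{m,n}` such that the box `(m+1-k, n+1-k)`
(in the 1-indexed column/row coordinates of the paper, i.e. the 0-indexed cell
`(n-k, m-k)` in row/column coordinates) does not belong to `λ`. -/
def HasMNIndex (l : YoungDiagram) (m n : ℕ) (k : ℤ) : Prop :=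
  (k ≤ min (m : ℤ) (n : ℤ) ∧ (((n : ℤ) - k).toNat, ((m : ℤ) - k).toNat) ∉ l.cells) ∧
    ∀ k' : ℤ, k' ≤ min (m : ℤ) (n : ℤ) →
      (((n : ℤ) - k').toNat, ((m : ℤ) - k').toNat) ∉ l.cells → k' ≤ k

/-! ### The ring of symmetric functions, modelled as polynomials in the power sums -/

/-- The ring of symmetric functions over `ℂ`: since the power sums `p₁, p₂, …` are
algebraically independent generators, we model it as the polynomial ring in the
variables `p₁, p₂, …`, with variable `n : ℕ` denoting `p_{n+1}`. -/
abbrev Sym := MvPolynomial ℕ ℂ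

/-- The power sum `p_k` (for `k ≥ 1`) as an element of `Sym`. -/
def pGen (k : ℕ) : Sym := MvPolynomial.X (k - 1)

/-- `p_λ = ∏_i p_{λ_i}` as an element of `Sym`. -/
def pMultF (p : Multiset ℕ) : Sym := (p.map pGen).prod

/-- `z_λ` for a multiset of parts. -/
def zMult (p : Multiset ℕ) : ℕ := ∏ i ∈ p.toFinset, i ^ p.count i * (p.count i).factorial

/-- The complete homogeneous symmetric function `h_k = ∑_{|μ| = k} z_μ⁻¹ p_μ` in `Sym`. -/
def hF (k : ℕ) : Sym := ∑ μ : Nat.Partition k, ((zMult μ.parts : ℂ))⁻¹ • pMultF μ.parts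

/-- `h_k` for integer `k`, vanishing for negative `k`. -/
def hFZ (k : ℤ) : Sym := if 0 ≤ k then hF k.toNat else 0

/-- The Schur function `s_λ` as an element of `Sym` (Jacobi–Trudi determinant). -/
def sF (l : YoungDiagram) : Sym :=
  Matrix.det (Matrix.of (fun i j : Fin (plen l) =>
    hFZ ((l.rowLen (i : ℕ) : ℤ) + (j : ℤ) - (i : ℤ))))

/-- The weight `z` of a monomial in the power sums: for `α` with `α i` the exponent of
`p_{i+1}`, this is `∏_i (i+1)^{α i} (α i)!`, so that `⟨p_λ, p_μ⟩ = z_λ δ_{λμ}`. -/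
def zExp (α : ℕ →₀ ℕ) : ℂ :=
  ∏ i ∈ α.support, ((i + 1 : ℕ) : ℂ) ^ (α i) * (Nat.factorial (α i))

/-- The Hall inner product on `Sym`, determined by `⟨p_λ, p_μ⟩ = z_λ δ_{λμ}`. -/
def hallInner (f g : Sym) : ℂ :=
  ∑ α ∈ f.support, MvPolynomial.coeff α f * MvPolynomial.coeff α g * zExp α

/-- The Littlewood–Richardson coefficient `c^λ_{μν} = ⟨s_μ s_ν, s_λ⟩`. -/
def lrCoeff (μ ν l : YoungDiagram) : ℂ := hallInner (sF μ * sF ν) (sF l)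

/-- The Littlewood–Schur function `LS_λ(X; Y) = ∑_{μ,ν} c^λ_{μν} s_μ(X) s_{ν'}(Y)`. -/
def LSfun (l : YoungDiagram) (X Y : List ℂ) : ℂ :=
  ∑ᶠ p : YoungDiagram × YoungDiagram, lrCoeff p.1 p.2 l * schur p.1 X * schur p.2.transpose Y

/-- The derivation operator `∂/∂p_k` (for `k ≥ 1`) on `Sym`. -/
def pderivK (k : ℕ) (f : Sym) : Sym := MvPolynomial.pderiv (k - 1) f

/-- The composite derivation operator `∂/∂p_λ`. -/
def pderivMult (p : Multiset ℕ) (f : Sym) : Sym :=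
  (Multiset.sort p (· ≤ ·)).foldr (fun k g => pderivK k g) f

/-- Evaluation (specialization) of a symmetric function at a finite sequence `X`:
the algebra homomorphism sending each `p_k` to `p_k(X)`. -/
def evalAt (X : List ℂ) : Sym →ₐ[ℂ] ℂ := MvPolynomial.aeval (fun i => pSym (i + 1) X)

/-! ### The unitary group, Haar measure and characteristic polynomials -/

/-- The unitary group `U(N)`. -/
abbrev UG (N : ℕ) := Matrix.unitaryGroup (Fin N) ℂ

instance (N : ℕ) : MeasurableSpace (UG N) := borel _

/-- `μ` is the normalized (probability) Haar measure on `U(N)`. -/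
def IsHaarProb {N : ℕ} (μ : Measure (UG N)) : Prop :=
  IsProbabilityMeasure μ ∧ ∀ g : UG N, Measure.map (fun x => g * x) μ = μ

/-- The characteristic polynomial `χ_g(z) = det(I - z g⁻¹)` of a unitary matrix. -/
def chi {N : ℕ} (g : UG N) (z : ℂ) : ℂ :=
  Matrix.det ((1 : Matrix (Fin N) (Fin N) ℂ) - z • ((g⁻¹ : UG N) : Matrix (Fin N) (Fin N) ℂ))

/-- The derivative `χ'_g`. -/
def chiD {N : ℕ} (g : UG N) (z : ℂ) : ℂ := deriv (chi g) z

/-- `det(-g)`. -/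
def detNeg {N : ℕ} (g : UG N) : ℂ := Matrix.det (-((g : Matrix (Fin N) (Fin N) ℂ)))

/-- The completed characteristic polynomial `Λ_g(z) = det(-g)^{1/2} z^{-N/2} χ_g(z)`,
using principal branches. -/
def Lam {N : ℕ} (g : UG N) (z : ℂ) : ℂ :=
  detNeg g ^ ((1 : ℂ) / 2) * z ^ (-(N : ℂ) / 2) * chi g z

/-- The derivative `Λ'_g`. -/
def LamD {N : ℕ} (g : UG N) (z : ℂ) : ℂ := deriv (Lam g) z

/-- The multiset of eigenvalues of `g`, listed in some order. -/
def eigList {N : ℕ} (g : UG N) : List ℂ :=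
  ((g : Matrix (Fin N) (Fin N) ℂ).charpoly.roots).toList

/-! ### Subsequences -/

/-- The subsequence of `L` consisting of the entries with index in `K` (in order). -/
def subAt (L : List ℂ) (K : Finset ℕ) : List ℂ :=
  (List.filter (fun i : Fin L.length => decide (i.val ∈ K)) (List.finRange L.length)).map L.get

/-- The complementary subsequence of `subAt L K`. -/
def coAt (L : List ℂ) (K : Finset ℕ) : List ℂ :=
  (List.filter (fun i : Fin L.length => decide (i.val ∉ K)) (List.finRange L.length)).map L.get


/-! ### Section 1: derivative of h -/

open MvPolynomial Finset

lemma hFZ_of_neg {m : ℤ} (hm : m < 0) : hFZ m = 0 := if_neg (not_le.mpr hm)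

lemma hFZ_ofNat (n : ℕ) : hFZ (n : ℤ) = hF n := by simp [hFZ]

lemma parts_zero_partition (μ : Nat.Partition 0) : μ.parts = 0 := by
  apply Multiset.eq_zero_of_forall_notMem
  intro a ha
  have h1 := μ.parts_pos ha
  have h2 : a ≤ μ.parts.sum := Multiset.le_sum_of_mem ha
  have h3 := μ.parts_sum
  omega

lemma hF_zero : hF 0 = 1 := by
  rw [hF, Fintype.sum_unique]
  rw [parts_zero_partition]
  simp [zMult, pMultF]

lemma hFZ_zero : hFZ 0 = 1 := by
  have : ((0:ℕ) : ℤ) = 0 := rfl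
  rw [← this, hFZ_ofNat, hF_zero]

lemma zMult_cons (a : ℕ) (s : Multiset ℕ) :
    zMult (a ::ₘ s) = a * (s.count a + 1) * zMult s := by
  classical
  unfold zMult
  rw [Multiset.toFinset_cons]
  by_cases h : a ∈ s.toFinset
  · rw [Finset.insert_eq_self.mpr h]
    rw [← Finset.mul_prod_erase _ _ h, ← Finset.mul_prod_erase _
      (fun i => i ^ s.count i * (s.count i).factorial) h]
    have hrest : ∏ i ∈ s.toFinset.erase a, i ^ (a ::ₘ s).count i * ((a ::ₘ s).count i).factorial
        = ∏ i ∈ s.toFinset.erase a, i ^ s.count i * (s.count i).factorial := by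
      apply Finset.prod_congr rfl
      intro i hi
      rw [Multiset.count_cons_of_ne (Finset.ne_of_mem_erase hi)]
    rw [hrest, Multiset.count_cons_self, pow_succ, Nat.factorial_succ]
    ring
  · have hc0 : Multiset.count a s = 0 := by
      rw [Multiset.count_eq_zero]
      exact fun hmem => h (Multiset.mem_toFinset.mpr hmem)
    rw [Finset.prod_insert h]
    have hrest : ∏ i ∈ s.toFinset, i ^ (a ::ₘ s).count i * ((a ::ₘ s).count i).factorial
        = ∏ i ∈ s.toFinset, i ^ s.count i * (s.count i).factorial := by
      apply Finset.prod_congr rfl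
      intro i hi
      have : i ≠ a := fun he => h (he ▸ hi)
      rw [Multiset.count_cons_of_ne this]
    rw [hrest, Multiset.count_cons_self, hc0]
    simp only [zero_add, pow_one, Nat.factorial_one, mul_one]

lemma zMult_pos (s : Multiset ℕ) (hs : ∀ a ∈ s, 0 < a) : 0 < zMult s := by
  apply Finset.prod_pos
  intro i hi
  have : 0 < i := hs i (Multiset.mem_toFinset.mp hi)
  positivity

/-- The exponent finsupp of `p_λ` as a monomial. -/
def expOf (p : Multiset ℕ) : ℕ →₀ ℕ := (p.map (fun a => a - 1)).toFinsupp

lemma expOf_cons (a : ℕ) (s : Multiset ℕ) :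
    expOf (a ::ₘ s) = Finsupp.single (a-1) 1 + expOf s := by
  ext i
  simp only [expOf, Multiset.map_cons, Multiset.toFinsupp_apply, Finsupp.add_apply,
    Finsupp.single_apply, Multiset.count_cons]
  by_cases h : i = a - 1 <;> simp [h] <;> omega

lemma expOf_count (p : Multiset ℕ) (hp : ∀ a ∈ p, 0 < a) (k : ℕ) (hk : 0 < k) :
    expOf p (k-1) = p.count k := by
  induction p using Multiset.induction_on with
  | empty => simp [expOf]
  | cons a s ih =>
    have ha : 0 < a := hp a (Multiset.mem_cons_self a s)
    have hs : ∀ b ∈ s, 0 < b := fun b hb => hp b (Multiset.mem_cons_of_mem hb)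
    rw [expOf_cons, Finsupp.add_apply, ih hs, Multiset.count_cons, Finsupp.single_apply]
    have : (a - 1 = k - 1) ↔ (k = a) := by omega
    by_cases h : k = a
    · simp [h]
      omega
    · have : ¬ (a - 1 = k - 1) := by omega
      simp [h, this]

lemma pMultF_monomial (p : Multiset ℕ) (hp : ∀ a ∈ p, 0 < a) :
    pMultF p = monomial (expOf p) 1 := by
  induction p using Multiset.induction_on with
  | empty => simp [pMultF, expOf]
  | cons a s ih =>
    have hs : ∀ b ∈ s, 0 < b := fun b hb => hp b (Multiset.mem_cons_of_mem hb)
    rw [pMultF, Multiset.map_cons, Multiset.prod_cons]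
    rw [show (Multiset.map pGen s).prod = pMultF s from rfl, ih hs]
    rw [pGen, show (X (a-1) : Sym) = monomial (Finsupp.single (a-1) 1) 1 from by
      rw [← X_pow_eq_monomial, pow_one]]
    rw [monomial_mul, expOf_cons, one_mul]
/-! ### Section 1b: k ∂/∂p_k h = shifted h -/

lemma part_le {n : ℕ} (μ : Nat.Partition n) {a : ℕ} (ha : a ∈ μ.parts) : a ≤ n := by
  have h2 : a ≤ μ.parts.sum := Multiset.le_sum_of_mem ha
  have h3 := μ.parts_sum
  omega

/-- Remove one part equal to `k`. -/
def eraseP {n k : ℕ} (μ : Nat.Partition n) (h : k ∈ μ.parts) : Nat.Partition (n - k) where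
  parts := μ.parts.erase k
  parts_pos := fun hm => μ.parts_pos (Multiset.mem_of_mem_erase hm)
  parts_sum := by
    have h1 : k ::ₘ μ.parts.erase k = μ.parts := Multiset.cons_erase h
    have h2 : k + (μ.parts.erase k).sum = n := by
      conv_rhs => rw [← μ.parts_sum, ← h1]
      rw [Multiset.sum_cons]
    omega

/-- Add a part equal to `k`. -/
def consP {n k : ℕ} (hk : 0 < k) (hkn : k ≤ n) (ν : Nat.Partition (n - k)) : Nat.Partition n where
  parts := k ::ₘ ν.parts
  parts_pos := fun hm => by
    rcases Multiset.mem_cons.mp hm with h | h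
    · omega
    · exact ν.parts_pos h
  parts_sum := by rw [Multiset.sum_cons, ν.parts_sum]; omega

lemma k_smul_pderivK_hF (k n : ℕ) (hk : 0 < k) :
    (k : ℂ) • pderivK k (hF n) = hFZ ((n:ℤ) - (k:ℤ)) := by
  classical
  have hstep : pderivK k (hF n) = ∑ μ : Nat.Partition n, (zMult μ.parts : ℂ)⁻¹ •
      monomial (expOf μ.parts - Finsupp.single (k-1) 1) ((μ.parts.count k : ℕ) : ℂ) := by
    rw [hF, pderivK, map_sum]
    refine Finset.sum_congr rfl (fun μ _ => ?_)
    rw [Derivation.map_smul, pMultF_monomial _ (fun a ha => μ.parts_pos ha), pderiv_monomial]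
    rw [expOf_count _ (fun a ha => μ.parts_pos ha) k hk, one_mul]
  rw [hstep, Finset.smul_sum]
  by_cases hkn : k ≤ n
  · have hcast : (n:ℤ) - (k:ℤ) = ((n - k : ℕ) : ℤ) := by omega
    rw [hcast, hFZ_ofNat, hF]
    have hzero : ∀ μ : Nat.Partition n, μ ∈ (Finset.univ : Finset (Nat.Partition n)) →
        (k:ℂ) • ((zMult μ.parts : ℂ)⁻¹ •
          monomial (expOf μ.parts - Finsupp.single (k-1) 1) ((μ.parts.count k : ℕ) : ℂ)) ≠ 0 →
        k ∈ μ.parts := by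
      intro μ _ hne
      by_contra hmem
      apply hne
      rw [Multiset.count_eq_zero.mpr hmem]
      simp
    rw [← Finset.sum_filter_of_ne hzero]
    refine Finset.sum_bij' (fun μ hμ => eraseP μ (Finset.mem_filter.mp hμ).2)
      (fun ν _ => consP hk hkn ν) (fun _ _ => Finset.mem_univ _)
      (fun ν _ => Finset.mem_filter.mpr ⟨Finset.mem_univ _, Multiset.mem_cons_self _ _⟩)
      ?_ ?_ ?_
    · intro μ hμ
      have h := (Finset.mem_filter.mp hμ).2
      apply Nat.Partition.ext
      simp only [consP, eraseP]
      exact Multiset.cons_erase h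
    · intro ν _
      apply Nat.Partition.ext
      simp only [consP, eraseP]
      exact Multiset.erase_cons_head k ν.parts
    · intro μ hμ
      have h := (Finset.mem_filter.mp hμ).2
      set q : Multiset ℕ := μ.parts.erase k with hq
      have hparts : μ.parts = k ::ₘ q := (Multiset.cons_erase h).symm
      have hqpos : ∀ a ∈ q, 0 < a := fun a ha => μ.parts_pos (Multiset.mem_of_mem_erase ha)
      have hzq : (zMult q : ℂ) ≠ 0 := Nat.cast_ne_zero.mpr (zMult_pos q hqpos).ne'
      have hcount : μ.parts.count k = q.count k + 1 := by
        rw [hparts, Multiset.count_cons_self]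
      have hexp : expOf μ.parts - Finsupp.single (k-1) 1 = expOf q := by
        rw [hparts, expOf_cons, add_tsub_cancel_left]
      have hz : zMult μ.parts = k * (q.count k + 1) * zMult q := by
        rw [hparts, zMult_cons]
      show (k:ℂ) • ((zMult μ.parts : ℂ)⁻¹ •
          monomial (expOf μ.parts - Finsupp.single (k-1) 1) ((μ.parts.count k : ℕ) : ℂ))
        = (zMult q : ℂ)⁻¹ • pMultF q
      rw [pMultF_monomial q hqpos, hcount, hexp, hz]
      have hmon : (monomial (expOf q) (((q.count k + 1 : ℕ)) : ℂ))
          = ((q.count k + 1 : ℕ) : ℂ) • monomial (expOf q) (1:ℂ) := by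
        rw [smul_monomial, smul_eq_mul, mul_one]
      rw [hmon, smul_smul, smul_smul]
      congr 1
      have hkC : (k:ℂ) ≠ 0 := Nat.cast_ne_zero.mpr (by omega)
      have hcC : ((q.count k : ℂ) + 1) ≠ 0 := by
        have : ((q.count k + 1 : ℕ) : ℂ) ≠ 0 := Nat.cast_ne_zero.mpr (by omega)
        push_cast at this
        exact this
      push_cast
      rw [mul_inv, mul_inv]
      have hre : (k:ℂ) * ((k:ℂ)⁻¹ * ((q.count k : ℂ) + 1)⁻¹ * ((zMult q : ℂ))⁻¹) * ((q.count k : ℂ) + 1)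
          = ((k:ℂ) * (k:ℂ)⁻¹) * (((q.count k : ℂ) + 1) * ((q.count k : ℂ) + 1)⁻¹) * ((zMult q : ℂ))⁻¹ := by
        ring
      rw [hre, mul_inv_cancel₀ hkC, mul_inv_cancel₀ hcC, one_mul, one_mul]
  · have hempty : ∀ μ : Nat.Partition n, μ.parts.count k = 0 := by
      intro μ
      rw [Multiset.count_eq_zero]
      intro hmem
      exact hkn (part_le μ hmem)
    have : ((n:ℤ) - (k:ℤ)) < 0 := by omega
    rw [hFZ_of_neg this]
    apply Finset.sum_eq_zero
    intro μ _
    rw [hempty μ]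
    simp

lemma k_smul_pderivK_hFZ (k : ℕ) (hk : 0 < k) (m : ℤ) :
    (k:ℂ) • pderivK k (hFZ m) = hFZ (m - (k:ℤ)) := by
  rcases le_or_gt 0 m with h | h
  · obtain ⟨a, rfl⟩ : ∃ a : ℕ, (a:ℤ) = m := ⟨m.toNat, Int.toNat_of_nonneg h⟩
    rw [hFZ_ofNat]
    exact k_smul_pderivK_hF k a hk
  · rw [hFZ_of_neg h, hFZ_of_neg (by omega)]
    rw [pderivK, map_zero, smul_zero]
/-! ### Section 2: Jacobi–Trudi determinants indexed by shifted parts -/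

/-- Jacobi–Trudi determinant attached to the "shifted parts" function `d` (`d r = λ_r - r`). -/
def Jdet (N : ℕ) (d : ℕ → ℤ) : Sym :=
  Matrix.det (Matrix.of fun i j : Fin N => hFZ (d i + j))

lemma Jdet_congr {N : ℕ} {d d' : ℕ → ℤ} (h : ∀ r, r < N → d r = d' r) :
    Jdet N d = Jdet N d' := by
  unfold Jdet
  congr 1
  ext i j
  rw [Matrix.of_apply, Matrix.of_apply, h i i.isLt]

lemma sF_eq_Jdet (l : YoungDiagram) :
    sF l = Jdet (plen l) (fun r => (l.rowLen r : ℤ) - r) := by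
  unfold sF Jdet
  congr 1
  ext i j
  rw [Matrix.of_apply, Matrix.of_apply]
  congr 1
  ring

lemma pderiv_finset_prod {α : Type} [DecidableEq α] (i : ℕ) (s : Finset α) (f : α → Sym) :
    MvPolynomial.pderiv i (∏ a ∈ s, f a)
      = ∑ a ∈ s, MvPolynomial.pderiv i (f a) * ∏ b ∈ s.erase a, f b := by
  classical
  induction s using Finset.induction_on with
  | empty => simp
  | @insert a s ha ih =>
    rw [Finset.prod_insert ha, Derivation.leibniz, ih]
    rw [Finset.sum_insert ha, Finset.erase_insert ha]
    have hx : ∀ x ∈ s, (MvPolynomial.pderiv i (f x)) * ∏ b ∈ (insert a s).erase x, f b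
        = f a * ((MvPolynomial.pderiv i (f x)) * ∏ b ∈ s.erase x, f b) := by
      intro x hxs
      have hxa : x ≠ a := fun h => ha (h ▸ hxs)
      rw [Finset.erase_insert_of_ne (Ne.symm hxa),
        Finset.prod_insert (fun hmem => ha (Finset.mem_of_mem_erase hmem))]
      ring
    rw [Finset.sum_congr rfl hx, ← Finset.mul_sum]
    rw [smul_eq_mul, smul_eq_mul]
    ring

lemma Jdet_expand (N : ℕ) (e : ℕ → ℤ) : Jdet N e = ∑ σ : Equiv.Perm (Fin N),
    ((Equiv.Perm.sign σ : ℤ) : Sym) * ∏ i : Fin N, hFZ (e (σ i) + i) := by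
  unfold Jdet
  rw [Matrix.det_apply']
  rfl

lemma k_smul_pderivK_Jdet (k N : ℕ) (d : ℕ → ℤ) (hk : 0 < k) :
    (k : ℂ) • pderivK k (Jdet N d) =
      ∑ i : Fin N, Jdet N (Function.update d (i : ℕ) (d i - (k:ℤ))) := by
  classical
  rw [Jdet_expand]
  rw [pderivK, map_sum, Finset.smul_sum]
  have hrhs : ∀ i : Fin N, Jdet N (Function.update d (i : ℕ) (d i - (k:ℤ)))
      = ∑ σ : Equiv.Perm (Fin N), ((Equiv.Perm.sign σ : ℤ) : Sym) *
          ∏ j : Fin N, hFZ (Function.update d (i : ℕ) (d i - (k:ℤ)) (σ j) + j) := by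
    intro i; exact Jdet_expand N _
  conv_rhs => rw [Finset.sum_congr rfl (fun i _ => hrhs i)]
  rw [Finset.sum_comm]
  refine Finset.sum_congr rfl (fun σ _ => ?_)
  have hsmul : ((Equiv.Perm.sign σ : ℤ) : Sym) * ∏ i : Fin N, hFZ (d (σ i) + i)
      = (Equiv.Perm.sign σ : ℤ) • ∏ i : Fin N, hFZ (d (σ i) + i) := (zsmul_eq_mul _ _).symm
  have hofapp : (∏ i : Fin N, Matrix.of (fun i j : Fin N => hFZ (d i + j)) (σ i) i)
      = ∏ i : Fin N, hFZ (d (σ i) + i) := rfl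
  rw [hsmul, map_zsmul, pderiv_finset_prod, smul_comm, Finset.smul_sum]
  have hterm : ∀ a : Fin N, (k:ℂ) • (MvPolynomial.pderiv (k-1) (hFZ (d (σ a) + a)) *
        ∏ b ∈ Finset.univ.erase a, hFZ (d (σ b) + b))
      = hFZ (d (σ a) + a - k) * ∏ b ∈ Finset.univ.erase a, hFZ (d (σ b) + b) := by
    intro a
    rw [← smul_mul_assoc]
    congr 1
    exact k_smul_pderivK_hFZ k hk (d (σ a) + a)
  rw [Finset.sum_congr rfl (fun a _ => hterm a)]
  -- right hand side: reindex i by σ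
  rw [← Equiv.sum_comp σ (fun i => ((Equiv.Perm.sign σ : ℤ) : Sym) *
      ∏ j : Fin N, hFZ (Function.update d (i : ℕ) (d i - (k:ℤ)) (σ j) + j))]
  rw [zsmul_eq_mul, Finset.mul_sum]
  refine Finset.sum_congr rfl (fun a _ => ?_)
  congr 1
  rw [← Finset.mul_prod_erase Finset.univ _ (Finset.mem_univ a)]
  congr 1
  · rw [Function.update_self]
    congr 1
    ring
  · refine Finset.prod_congr rfl (fun b hb => ?_)
    have hba : b ≠ a := Finset.ne_of_mem_erase hb
    have hv : ((σ b : Fin N) : ℕ) ≠ ((σ a : Fin N) : ℕ) := by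
      intro hval
      exact hba (σ.injective (Fin.val_injective hval))
    rw [Function.update_of_ne hv]

lemma Jdet_eq_zero_of_eq {N : ℕ} {d : ℕ → ℤ} {i j : Fin N} (hij : i ≠ j)
    (h : d i = d j) : Jdet N d = 0 := by
  apply Matrix.det_zero_of_row_eq hij
  funext col
  show hFZ (d i + col) = hFZ (d j + col)
  rw [h]

lemma Jdet_eq_zero_of_neg {N : ℕ} {d : ℕ → ℤ} {i : Fin N} (h : d i + N ≤ 0) :
    Jdet N d = 0 := by
  apply Matrix.det_eq_zero_of_row_eq_zero i
  intro col
  have hc : (col : ℕ) < N := col.isLt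
  apply hFZ_of_neg
  omega

lemma Jdet_swap {N : ℕ} (d : ℕ → ℤ) (a b : Fin N) (hab : a ≠ b) :
    Jdet N (Function.update (Function.update d (a:ℕ) (d b)) (b:ℕ) (d a)) = - Jdet N d := by
  have hmat : (Matrix.of fun i j : Fin N =>
      hFZ ((Function.update (Function.update d (a:ℕ) (d b)) (b:ℕ) (d a)) i + j))
      = (Matrix.of fun i j : Fin N => hFZ (d i + j)).submatrix (Equiv.swap a b) id := by
    ext i j
    simp only [Matrix.submatrix_apply, Matrix.of_apply, id]
    congr 2
    rcases eq_or_ne i b with rfl | hib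
    · rw [Function.update_self, Equiv.swap_apply_right]
    · have hib' : (i:ℕ) ≠ (b:ℕ) := fun hv => hib (Fin.val_injective hv)
      rw [Function.update_of_ne hib']
      rcases eq_or_ne i a with rfl | hia
      · rw [Function.update_self, Equiv.swap_apply_left]
      · have hia' : (i:ℕ) ≠ (a:ℕ) := fun hv => hia (Fin.val_injective hv)
        rw [Function.update_of_ne hia', Equiv.swap_apply_of_ne_of_ne hia hib]
  unfold Jdet
  rw [hmat, Matrix.det_permute, Equiv.Perm.sign_swap hab]
  simp

/-- Moving the value `v` from slot `i` down to slot `t`. -/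
def eMove (c : ℕ → ℤ) (v : ℤ) (i t : ℕ) : ℕ → ℤ := fun r =>
  if r < i then c r else if r < t then c (r + 1) else if r = t then v else c r

lemma eMove_lt {c : ℕ → ℤ} {v : ℤ} {i t r : ℕ} (h : r < i) : eMove c v i t r = c r :=
  if_pos h

lemma eMove_mid {c : ℕ → ℤ} {v : ℤ} {i t r : ℕ} (h1 : i ≤ r) (h2 : r < t) :
    eMove c v i t r = c (r + 1) := by
  unfold eMove
  rw [if_neg (by omega), if_pos h2]

lemma eMove_eq {c : ℕ → ℤ} {v : ℤ} {i t r : ℕ} (h1 : i ≤ r) (h2 : r = t) :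
    eMove c v i t r = v := by
  unfold eMove
  rw [if_neg (by omega), if_neg (by omega), if_pos h2]

lemma eMove_gt {c : ℕ → ℤ} {v : ℤ} {i t r : ℕ} (h2 : t < r) :
    eMove c v i t r = c r := by
  unfold eMove
  rcases Nat.lt_or_ge r i with h | h
  · rw [if_pos h]
  · rw [if_neg (by omega), if_neg (by omega), if_neg (by omega)]

lemma eMove_self (c : ℕ → ℤ) (v : ℤ) (i : ℕ) : eMove c v i i = Function.update c i v := by
  funext r
  rcases lt_trichotomy r i with h | rfl | h
  · rw [eMove_lt h, Function.update_of_ne (by omega)]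
  · rw [eMove_eq (le_refl r) rfl, Function.update_self]
  · rw [eMove_gt h, Function.update_of_ne (by omega)]

lemma Jdet_move (N : ℕ) (c : ℕ → ℤ) (v : ℤ) (i : ℕ) :
    ∀ t, i ≤ t → t < N →
    Jdet N (Function.update c i v) = (-1 : ℂ) ^ (t - i) • Jdet N (eMove c v i t) := by
  intro t
  induction t with
  | zero =>
    intro hit _
    have : i = 0 := by omega
    subst this
    rw [eMove_self]
    simp
  | succ t ih =>
    intro hit htN
    rcases Nat.lt_or_ge i (t+1) with hlt | hge
    · have hit' : i ≤ t := by omega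
      have htN' : t < N := by omega
      have e1 : eMove c v i t (t+1) = c (t+1) := eMove_gt (by omega)
      have e2 : eMove c v i t t = v := eMove_eq hit' rfl
      have hswap : eMove c v i (t+1) = Function.update (Function.update (eMove c v i t) t
          ((eMove c v i t) (t+1))) (t+1) ((eMove c v i t) t) := by
        funext r
        rcases eq_or_ne r (t+1) with rfl | hr1
        · rw [Function.update_self, e2, eMove_eq (by omega) rfl]
        · rw [Function.update_of_ne hr1]
          rcases eq_or_ne r t with rfl | hr2
          · rw [Function.update_self, e1, eMove_mid hit' (by omega)]
          · rw [Function.update_of_ne hr2]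
            rcases Nat.lt_or_ge r i with h1 | h1
            · rw [eMove_lt h1, eMove_lt h1]
            · rcases Nat.lt_or_ge r t with h2 | h2
              · rw [eMove_mid h1 h2, eMove_mid h1 (by omega)]
              · have h3 : t + 1 < r := by omega
                rw [eMove_gt h3, eMove_gt (show t < r by omega)]
      have hJ : Jdet N (eMove c v i (t+1)) = - Jdet N (eMove c v i t) := by
        rw [hswap]
        exact Jdet_swap (eMove c v i t) ⟨t, htN'⟩ ⟨t+1, htN⟩
          (Fin.ne_of_val_ne (show t ≠ t + 1 by omega))
      rw [hJ, ih hit' htN']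
      have h1 : t + 1 - i = (t - i) + 1 := by omega
      have h2 : ((-1:ℂ)) • (- Jdet N (eMove c v i t)) = Jdet N (eMove c v i t) := by
        rw [smul_neg, neg_smul, one_smul, neg_neg]
      rw [h1, pow_succ, mul_smul, h2]
    · have : i = t + 1 := by omega
      subst this
      rw [eMove_self]
      simp
/-! ### Section 3: trailing rows reduction -/

lemma Jdet_trailing (p : ℕ) : ∀ N, p ≤ N → ∀ d : ℕ → ℤ,
    (∀ r, p ≤ r → r < N → d r = -(r:ℤ)) → Jdet N d = Jdet p d := by
  intro N
  induction N with
  | zero =>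
    intro h d _
    have hp : p = 0 := Nat.le_zero.mp h
    rw [hp]
  | succ N ih =>
    intro hpN d h
    rcases Nat.lt_or_ge N p with hc | hc
    · have : p = N + 1 := by omega
      rw [this]
    · have hd : d N = -(N:ℤ) := h N hc (by omega)
      have step : Jdet (N+1) d = Jdet N d := by
        unfold Jdet
        rw [Matrix.det_succ_row _ (Fin.last N)]
        rw [Finset.sum_eq_single (Fin.last N)]
        · have hentry : (Matrix.of fun i j : Fin (N+1) => hFZ (d i + j)) (Fin.last N) (Fin.last N)
              = 1 := by
            rw [Matrix.of_apply]
            have : d ((Fin.last N : Fin (N+1)) : ℕ) + ((Fin.last N : Fin (N+1)) : ℕ) = 0 := by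
              simp only [Fin.val_last]
              omega
            rw [this, hFZ_zero]
          rw [hentry]
          have hsign : ((-1 : Sym) ^ (((Fin.last N : Fin (N+1)) : ℕ) + ((Fin.last N : Fin (N+1)) : ℕ))) = 1 := by
            simp only [Fin.val_last]
            exact Even.neg_one_pow ⟨N, by ring⟩
          rw [hsign]
          simp only [one_mul, mul_one]
          congr 1
          ext i j
          simp only [Matrix.submatrix_apply, Matrix.of_apply, Fin.succAbove_last, Fin.coe_castSucc]
        · intro j _ hj
          have hjv : (j : ℕ) < N := by
            have := j.isLt
            have : (j:ℕ) ≠ N := fun he => hj (Fin.ext (by simp [he]))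
            omega
          have hz : (Matrix.of fun i j : Fin (N+1) => hFZ (d i + j)) (Fin.last N) j = 0 := by
            rw [Matrix.of_apply]
            apply hFZ_of_neg
            simp only [Fin.val_last]
            omega
          rw [hz, mul_zero, zero_mul]
        · intro hc'
          exact absurd (Finset.mem_univ _) hc'
      rw [step]
      exact ih (by omega) d (fun r hr hrN => h r hr (by omega))
/-! ### Section 4: Young diagram utilities -/

/-- The shifted parts sequence `c_r = λ_r - r`. -/
def cSeq (l : YoungDiagram) : ℕ → ℤ := fun r => (l.rowLen r : ℤ) - r

lemma cSeq_strict (l : YoungDiagram) {r s : ℕ} (h : r < s) : cSeq l s < cSeq l r := by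
  have := l.rowLen_anti r s (le_of_lt h)
  unfold cSeq
  omega

lemma rowLen_eq_zero_of_plen_le (l : YoungDiagram) {r : ℕ} (h : plen l ≤ r) :
    l.rowLen r = 0 := by
  by_contra hne
  have hpos : 0 < l.rowLen r := Nat.pos_of_ne_zero hne
  have h1 : (r, 0) ∈ l := YoungDiagram.mem_iff_lt_rowLen.mpr hpos
  have h2 := YoungDiagram.mem_iff_lt_colLen.mp h1
  unfold plen at h
  omega

lemma rowLen_pos_of_lt_plen (l : YoungDiagram) {r : ℕ} (h : r < plen l) :
    0 < l.rowLen r := by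
  have h1 : (r, 0) ∈ l := YoungDiagram.mem_iff_lt_colLen.mpr h
  exact YoungDiagram.mem_iff_lt_rowLen.mp h1

lemma plen_le_of_rowLen_zero (l : YoungDiagram) {r : ℕ} (h : l.rowLen r = 0) :
    plen l ≤ r := by
  by_contra hc
  have := rowLen_pos_of_lt_plen l (Nat.lt_of_not_le hc)
  omega

lemma rowLen_le_of_le {μ l : YoungDiagram} (h : μ ≤ l) (r : ℕ) :
    μ.rowLen r ≤ l.rowLen r := by
  by_contra hc
  have h1 : (r, l.rowLen r) ∈ μ := YoungDiagram.mem_iff_lt_rowLen.mpr (by omega)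
  have h2 : (r, l.rowLen r) ∈ l := by
    rw [← YoungDiagram.mem_cells]
    exact YoungDiagram.cells_subset_iff.mpr h (YoungDiagram.mem_cells _ |>.mpr h1)
  have := YoungDiagram.mem_iff_lt_rowLen.mp h2
  omega

lemma le_of_rowLen_le {μ l : YoungDiagram} (h : ∀ r, μ.rowLen r ≤ l.rowLen r) : μ ≤ l := by
  rw [← YoungDiagram.cells_subset_iff]
  intro p hp
  obtain ⟨a, b⟩ := p
  rw [YoungDiagram.mem_cells, YoungDiagram.mem_iff_lt_rowLen] at hp ⊢
  exact lt_of_lt_of_le hp (h a)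

lemma yd_eq_of_rowLen_eq {μ l : YoungDiagram} (h : ∀ r, μ.rowLen r = l.rowLen r) : μ = l := by
  ext p
  obtain ⟨a, b⟩ := p
  show (a, b) ∈ μ.cells ↔ (a, b) ∈ l.cells
  rw [YoungDiagram.mem_cells, YoungDiagram.mem_cells,
    YoungDiagram.mem_iff_lt_rowLen, YoungDiagram.mem_iff_lt_rowLen, h a]

lemma row_mem_lt_plen {l : YoungDiagram} {p : ℕ × ℕ} (hp : p ∈ l) : p.1 < plen l := by
  have h1 : (p.1, 0) ∈ l := by
    apply l.up_left_mem (le_refl _) (Nat.zero_le _)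
    rwa [Prod.mk.eta]
  exact YoungDiagram.mem_iff_lt_colLen.mp h1

/-- Young diagram with `n` rows given by an antitone row-length function `f`. -/
def ydOfFn (n : ℕ) (f : ℕ → ℕ) : YoungDiagram :=
  if hf : ∀ r s : ℕ, r ≤ s → f s ≤ f r then
    ⟨(Finset.range n ×ˢ Finset.range (f 0 + 1)).filter (fun p => p.2 < f p.1), by
      intro q p hpq hp
      simp only [Finset.coe_filter, Set.mem_setOf_eq, Finset.mem_product,
        Finset.mem_range] at hp ⊢
      obtain ⟨⟨hq1, hq2⟩, hq3⟩ := hp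
      have h1 : p.1 ≤ q.1 := hpq.1
      have h2 : p.2 ≤ q.2 := hpq.2
      have h3 : f q.1 ≤ f p.1 := hf _ _ h1
      have h4 : f p.1 ≤ f 0 := hf 0 _ (Nat.zero_le _)
      exact ⟨⟨by omega, by omega⟩, by omega⟩⟩
  else ⊥

lemma mem_ydOfFn {n : ℕ} {f : ℕ → ℕ} (hf : ∀ r s : ℕ, r ≤ s → f s ≤ f r) (p : ℕ × ℕ) :
    p ∈ ydOfFn n f ↔ p.1 < n ∧ p.2 < f p.1 := by
  unfold ydOfFn
  rw [dif_pos hf]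
  show p ∈ Finset.filter _ _ ↔ _
  rw [Finset.mem_filter, Finset.mem_product, Finset.mem_range, Finset.mem_range]
  constructor
  · rintro ⟨⟨h1, _⟩, h3⟩
    exact ⟨h1, h3⟩
  · rintro ⟨h1, h3⟩
    have h4 : f p.1 ≤ f 0 := hf 0 _ (Nat.zero_le _)
    exact ⟨⟨h1, by omega⟩, h3⟩

lemma rowLen_ydOfFn {n : ℕ} {f : ℕ → ℕ} (hf : ∀ r s : ℕ, r ≤ s → f s ≤ f r) (r : ℕ) :
    (ydOfFn n f).rowLen r = if r < n then f r else 0 := by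
  apply eq_of_forall_lt_iff
  intro x
  rw [← YoungDiagram.mem_iff_lt_rowLen, mem_ydOfFn hf]
  by_cases h : r < n <;> simp [h]

/-- Cardinality of a skew diagram, row by row. -/
lemma card_sdiff_rows (μ l : YoungDiagram) (hμl : μ ≤ l) (N : ℕ) (hN : plen l ≤ N) :
    (l.cells \ μ.cells).card = ∑ r ∈ Finset.range N, (l.rowLen r - μ.rowLen r) := by
  classical
  rw [Finset.card_eq_sum_card_fiberwise (f := Prod.fst) (t := Finset.range N)
    (fun p hp => by
      rw [Finset.mem_coe, Finset.mem_sdiff] at hp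
      have h1 : p ∈ l := (YoungDiagram.mem_cells p).mp hp.1
      have := row_mem_lt_plen h1
      exact Finset.mem_range.mpr (by omega))]
  refine Finset.sum_congr rfl (fun r _ => ?_)
  have hfib : Finset.filter (fun p => p.1 = r) (l.cells \ μ.cells)
      = (Finset.Ico (μ.rowLen r) (l.rowLen r)).image (fun x => (r, x)) := by
    ext p
    obtain ⟨a, b⟩ := p
    simp only [Finset.mem_filter, Finset.mem_sdiff, Finset.mem_image, Finset.mem_Ico]
    constructor
    · rintro ⟨⟨hl, hμ⟩, rfl⟩
      refine ⟨b, ⟨?_, ?_⟩, rfl⟩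
      · by_contra hc
        exact hμ ((YoungDiagram.mem_cells _).mpr
          (YoungDiagram.mem_iff_lt_rowLen.mpr (by omega)))
      · exact YoungDiagram.mem_iff_lt_rowLen.mp ((YoungDiagram.mem_cells _).mp hl)
    · rintro ⟨x, ⟨hx1, hx2⟩, he⟩
      obtain ⟨rfl, rfl⟩ : r = a ∧ x = b := by
        constructor <;> [exact (congrArg Prod.fst he); exact (congrArg Prod.snd he)]
      refine ⟨⟨(YoungDiagram.mem_cells _).mpr (YoungDiagram.mem_iff_lt_rowLen.mpr hx2), ?_⟩, rfl⟩
      intro hc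
      have := YoungDiagram.mem_iff_lt_rowLen.mp ((YoungDiagram.mem_cells _).mp hc)
      omega
  rw [hfib, Finset.card_image_of_injective _ (fun a b h => by
    simpa using congrArg Prod.snd h), Nat.card_Ico]
/-! ### Section 5: the candidate ribbon complement diagrams -/

/-- The value to which the `i`-th shifted part is lowered. -/
def vVal (l : YoungDiagram) (k i : ℕ) : ℤ := cSeq l i - k

/-- `i` is a valid row index for removing a `k`-ribbon from `l`. -/
def Valid (l : YoungDiagram) (k i : ℕ) : Prop :=
  i < plen l ∧ (-(plen l : ℤ) < vVal l k i) ∧ ∀ j, j < plen l → cSeq l j ≠ vVal l k i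

/-- The landing position of the lowered shifted part. -/
def tIdx (l : YoungDiagram) (k i : ℕ) : ℕ :=
  Nat.findGreatest (fun s => vVal l k i < cSeq l s) (plen l - 1)

section valid

variable {l : YoungDiagram} {k i : ℕ}

lemma v_lt_c (hk : 0 < k) : vVal l k i < cSeq l i := by
  unfold vVal; omega

lemma tIdx_ge (hk : 0 < k) (hv : Valid l k i) : i ≤ tIdx l k i := by
  have h1 : i ≤ plen l - 1 := by have := hv.1; omega
  exact Nat.le_findGreatest h1 (v_lt_c hk)

lemma tIdx_lt_plen (hv : Valid l k i) : tIdx l k i < plen l := by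
  have h1 : tIdx l k i ≤ plen l - 1 := Nat.findGreatest_le _
  have := hv.1
  omega

lemma v_lt_cSeq_tIdx (hk : 0 < k) (hv : Valid l k i) :
    vVal l k i < cSeq l (tIdx l k i) := by
  have h1 : i ≤ plen l - 1 := by have := hv.1; omega
  unfold tIdx
  exact Nat.findGreatest_spec (P := fun s => vVal l k i < cSeq l s) h1 (v_lt_c hk)

lemma v_lt_cSeq_of_le_tIdx (hk : 0 < k) (hv : Valid l k i) {s : ℕ} (hs : s ≤ tIdx l k i) :
    vVal l k i < cSeq l s := by
  rcases Nat.eq_or_lt_of_le hs with rfl | hlt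
  · exact v_lt_cSeq_tIdx hk hv
  · exact lt_trans (v_lt_cSeq_tIdx hk hv) (cSeq_strict l hlt)

lemma cSeq_lt_v_of_tIdx_lt (hv : Valid l k i) {s : ℕ}
    (h1 : tIdx l k i < s) (h2 : s < plen l) : cSeq l s < vVal l k i := by
  have hng := Nat.findGreatest_is_greatest (k := s)
    (P := fun s => vVal l k i < cSeq l s) h1 (by omega)
  have hne := hv.2.2 s h2
  omega

/-- The moved shifted-parts sequence. -/
def cmSeq (l : YoungDiagram) (k i : ℕ) : ℕ → ℤ :=
  eMove (cSeq l) (vVal l k i) i (tIdx l k i)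

lemma cSeq_neg (l : YoungDiagram) {r : ℕ} (hr : plen l ≤ r) : cSeq l r = -(r:ℤ) := by
  unfold cSeq
  rw [rowLen_eq_zero_of_plen_le l hr]
  simp

lemma cmSeq_eq_of_ge (hv : Valid l k i) {r : ℕ} (hr : plen l ≤ r) :
    cmSeq l k i r = cSeq l r := by
  have ht := tIdx_lt_plen hv
  exact eMove_gt (by omega)

lemma cmSeq_le (hk : 0 < k) (hv : Valid l k i) (r : ℕ) : cmSeq l k i r ≤ cSeq l r := by
  unfold cmSeq
  rcases Nat.lt_or_ge r i with h1 | h1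
  · rw [eMove_lt h1]
  · rcases Nat.lt_or_ge r (tIdx l k i) with h2 | h2
    · rw [eMove_mid h1 h2]
      exact le_of_lt (cSeq_strict l (by omega))
    · rcases Nat.eq_or_lt_of_le h2 with rfl | h3
      · rw [eMove_eq h1 rfl]
        exact le_of_lt (v_lt_cSeq_of_le_tIdx hk hv (le_refl _))
      · rw [eMove_gt h3]

lemma cmSeq_lt (hk : 0 < k) (hv : Valid l k i) {r : ℕ} (h1 : i ≤ r) (h2 : r ≤ tIdx l k i) :
    cmSeq l k i r < cSeq l r := by
  unfold cmSeq
  rcases Nat.eq_or_lt_of_le h2 with rfl | h3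
  · rw [eMove_eq h1 rfl]
    exact v_lt_cSeq_of_le_tIdx hk hv (le_refl _)
  · rw [eMove_mid h1 h3]
    exact cSeq_strict l (by omega)

lemma cmSeq_eq_out (hv : Valid l k i) {r : ℕ} (h : r < i ∨ tIdx l k i < r) :
    cmSeq l k i r = cSeq l r := by
  unfold cmSeq
  rcases h with h | h
  · exact eMove_lt h
  · exact eMove_gt h

lemma cmSeq_strict (hk : 0 < k) (hv : Valid l k i) {r : ℕ} (hr : r + 1 < plen l) :
    cmSeq l k i (r + 1) < cmSeq l k i r := by
  have hti := tIdx_ge hk hv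
  have htn := tIdx_lt_plen hv
  unfold cmSeq
  set t := tIdx l k i with hT
  rcases Nat.lt_or_ge (r+1) i with h1 | h1
  · rw [eMove_lt h1, eMove_lt (by omega)]
    exact cSeq_strict l (by omega)
  · rcases Nat.lt_or_ge (r+1) t with h2 | h2
    · rw [eMove_mid h1 h2]
      rcases Nat.lt_or_ge r i with h3 | h3
      · rw [eMove_lt h3]
        exact cSeq_strict l (by omega)
      · rw [eMove_mid h3 (by omega)]
        exact cSeq_strict l (by omega)
    · rcases Nat.eq_or_lt_of_le h2 with heq | h3
      · rw [eMove_eq h1 heq.symm]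
        rcases Nat.lt_or_ge r i with h4 | h4
        · rw [eMove_lt h4]
          have hvi := v_lt_c (l := l) (i := i) hk
          have : cSeq l i < cSeq l r := cSeq_strict l (by omega)
          omega
        · rw [eMove_mid h4 (by omega)]
          have hvt : vVal l k i < cSeq l (tIdx l k i) := v_lt_cSeq_tIdx hk hv
          have heq' : tIdx l k i = r + 1 := heq
          rw [heq'] at hvt
          exact hvt
      · rw [eMove_gt (show t < r + 1 by omega)]
        rcases Nat.eq_or_lt_of_le (show t ≤ r by omega) with heq | h4
        · rw [eMove_eq (by omega) heq.symm]
          exact cSeq_lt_v_of_tIdx_lt hv (by omega) hr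
        · rw [eMove_gt h4]
          exact cSeq_strict l (by omega)

lemma cmSeq_add_anti (hk : 0 < k) (hv : Valid l k i) :
    ∀ s, s < plen l → ∀ r, r ≤ s → cmSeq l k i s + s ≤ cmSeq l k i r + r := by
  intro s
  induction s with
  | zero =>
    intro _ r hr
    have : r = 0 := by omega
    rw [this]
  | succ s ih =>
    intro hs r hr
    rcases Nat.eq_or_lt_of_le hr with rfl | h
    · exact le_refl _
    · have h1 : cmSeq l k i (s+1) < cmSeq l k i s := cmSeq_strict hk hv hs
      have h2 := ih (by omega) r (by omega)
      push_cast
      omega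

lemma cmSeq_last_nonneg (hk : 0 < k) (hv : Valid l k i) :
    0 ≤ cmSeq l k i (plen l - 1) + ((plen l : ℤ) - 1) := by
  have hn := hv.1
  have ht := tIdx_lt_plen hv
  have hti := tIdx_ge hk hv
  rcases Nat.eq_or_lt_of_le (show tIdx l k i ≤ plen l - 1 from Nat.findGreatest_le _) with heq | hlt
  · have : cmSeq l k i (plen l - 1) = vVal l k i := by
      unfold cmSeq
      exact eMove_eq (by omega) heq.symm
    rw [this]
    have := hv.2.1
    omega
  · have : cmSeq l k i (plen l - 1) = cSeq l (plen l - 1) :=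
      cmSeq_eq_out hv (Or.inr hlt)
    rw [this]
    unfold cSeq
    have : 0 < l.rowLen (plen l - 1) := rowLen_pos_of_lt_plen l (by omega)
    omega

lemma cmSeq_nonneg (hk : 0 < k) (hv : Valid l k i) {r : ℕ} (hr : r < plen l) :
    0 ≤ cmSeq l k i r + r := by
  have h1 := cmSeq_add_anti hk hv (plen l - 1) (by omega) r (by omega)
  have h2 := cmSeq_last_nonneg hk hv
  have hn := hv.1
  push_cast at h1 h2 ⊢
  omega

/-- The row-length function of the candidate diagram. -/
def fFun (l : YoungDiagram) (k i : ℕ) : ℕ → ℕ := fun r => (cmSeq l k i r + r).toNat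

lemma fFun_cast (hk : 0 < k) (hv : Valid l k i) {r : ℕ} (hr : r < plen l) :
    (fFun l k i r : ℤ) = cmSeq l k i r + r :=
  Int.toNat_of_nonneg (cmSeq_nonneg hk hv hr)

lemma fFun_zero (hv : Valid l k i) {r : ℕ} (hr : plen l ≤ r) : fFun l k i r = 0 := by
  unfold fFun
  rw [cmSeq_eq_of_ge hv hr, cSeq_neg l hr]
  simp

lemma fFun_anti (hk : 0 < k) (hv : Valid l k i) :
    ∀ r s : ℕ, r ≤ s → fFun l k i s ≤ fFun l k i r := by
  have hstep : ∀ r : ℕ, fFun l k i (r+1) ≤ fFun l k i r := by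
    intro r
    rcases Nat.lt_or_ge (r+1) (plen l) with h | h
    · have h1 := cmSeq_strict hk hv h
      have h2 := fFun_cast hk hv h
      have h3 := fFun_cast hk hv (show r < plen l by omega)
      omega
    · rw [fFun_zero hv h]
      exact Nat.zero_le _
  intro r s hrs
  induction s, hrs using Nat.le_induction with
  | base => exact le_refl _
  | succ s hs ih => exact le_trans (hstep s) ih

/-- The candidate diagram `μ_i` obtained by removing a `k`-ribbon starting at row `i`. -/
def ribbonDiag (l : YoungDiagram) (k i : ℕ) : YoungDiagram :=
  ydOfFn (plen l) (fFun l k i)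

lemma rowLen_ribbonDiag (hk : 0 < k) (hv : Valid l k i) (r : ℕ) :
    (ribbonDiag l k i).rowLen r = fFun l k i r := by
  rw [ribbonDiag, rowLen_ydOfFn (fFun_anti hk hv)]
  by_cases h : r < plen l
  · rw [if_pos h]
  · rw [if_neg h, fFun_zero hv (by omega)]

lemma ribbonDiag_le (hk : 0 < k) (hv : Valid l k i) : ribbonDiag l k i ≤ l := by
  apply le_of_rowLen_le
  intro r
  rw [rowLen_ribbonDiag hk hv]
  rcases Nat.lt_or_ge r (plen l) with h | h
  · have h1 := cmSeq_le hk hv r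
    have h2 := fFun_cast hk hv h
    unfold cSeq at h1
    omega
  · rw [fFun_zero hv h]
    exact Nat.zero_le _

lemma fFun_lt_rowLen (hk : 0 < k) (hv : Valid l k i) {r : ℕ}
    (h1 : i ≤ r) (h2 : r ≤ tIdx l k i) : fFun l k i r < l.rowLen r := by
  have htn := tIdx_lt_plen hv
  have hc := cmSeq_lt hk hv h1 h2
  have h3 := fFun_cast hk hv (show r < plen l by omega)
  unfold cSeq at hc
  omega

lemma fFun_eq_rowLen (hk : 0 < k) (hv : Valid l k i) {r : ℕ}
    (h : r < i ∨ tIdx l k i < r) : fFun l k i r = l.rowLen r := by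
  rcases Nat.lt_or_ge r (plen l) with hr | hr
  · have hc := cmSeq_eq_out hv h
    have h3 := fFun_cast hk hv hr
    unfold cSeq at hc
    omega
  · rw [fFun_zero hv hr, rowLen_eq_zero_of_plen_le l hr]

/-- Membership in the skew diagram. -/
lemma mem_skew_iff (hk : 0 < k) (hv : Valid l k i) (r x : ℕ) :
    (r, x) ∈ l.cells \ (ribbonDiag l k i).cells ↔
      fFun l k i r ≤ x ∧ x < l.rowLen r := by
  rw [Finset.mem_sdiff, YoungDiagram.mem_cells, YoungDiagram.mem_cells,
    YoungDiagram.mem_iff_lt_rowLen, YoungDiagram.mem_iff_lt_rowLen,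
    rowLen_ribbonDiag hk hv]
  omega

lemma mem_skew_rows (hk : 0 < k) (hv : Valid l k i) {r x : ℕ}
    (h : (r, x) ∈ l.cells \ (ribbonDiag l k i).cells) :
    i ≤ r ∧ r ≤ tIdx l k i := by
  rw [mem_skew_iff hk hv] at h
  by_contra hc
  have : r < i ∨ tIdx l k i < r := by omega
  have := fFun_eq_rowLen hk hv this
  omega

/-- The structural identity: inside the ribbon, `f_r = λ_{r+1} - 1`. -/
lemma fFun_structure (hk : 0 < k) (hv : Valid l k i) {r : ℕ}
    (h1 : i ≤ r) (h2 : r < tIdx l k i) :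
    (fFun l k i r : ℤ) = (l.rowLen (r+1) : ℤ) - 1 := by
  have htn := tIdx_lt_plen hv
  have h3 := fFun_cast hk hv (show r < plen l by omega)
  have h4 : cmSeq l k i r = cSeq l (r+1) := by
    unfold cmSeq
    exact eMove_mid h1 h2
  rw [h3, h4]
  unfold cSeq
  push_cast
  ring

lemma fFun_tIdx (hk : 0 < k) (hv : Valid l k i) :
    (fFun l k i (tIdx l k i) : ℤ) = vVal l k i + tIdx l k i := by
  have htn := tIdx_lt_plen hv
  have h3 := fFun_cast hk hv htn
  have h4 : cmSeq l k i (tIdx l k i) = vVal l k i := by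
    unfold cmSeq
    exact eMove_eq (tIdx_ge hk hv) rfl
  rw [h3, h4]

end valid
/-! ### Section 6: the candidate diagrams give ribbons -/

section valid2

variable {l : YoungDiagram} {k i : ℕ}

lemma sum_skew_eq (hk : 0 < k) (hv : Valid l k i) :
    ∑ r ∈ Finset.range (plen l), ((l.rowLen r : ℤ) - (fFun l k i r : ℤ)) = k := by
  have hti := tIdx_ge hk hv
  have htn := tIdx_lt_plen hv
  have hsub : ∑ r ∈ Finset.range (plen l), ((l.rowLen r : ℤ) - (fFun l k i r : ℤ))
      = ∑ r ∈ Finset.Ico i (tIdx l k i + 1), ((l.rowLen r : ℤ) - (fFun l k i r : ℤ)) := by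
    rw [← Finset.sum_subset (s₁ := Finset.Ico i (tIdx l k i + 1))
      (fun r hr => by rw [Finset.mem_Ico] at hr; exact Finset.mem_range.mpr (by omega))
      (fun r hr hnot => by
        rw [Finset.mem_Ico] at hnot
        have hor : r < i ∨ tIdx l k i < r := by omega
        rw [fFun_eq_rowLen hk hv hor]
        ring)]
  rw [hsub, Finset.sum_Ico_succ_top (by omega)]
  have hmid : ∀ r ∈ Finset.Ico i (tIdx l k i), ((l.rowLen r : ℤ) - (fFun l k i r : ℤ))
      = (fun y => cSeq l y) r - (fun y => cSeq l y) (r+1) := by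
    intro r hr
    rw [Finset.mem_Ico] at hr
    rw [fFun_structure hk hv hr.1 hr.2]
    unfold cSeq
    push_cast
    ring
  rw [Finset.sum_congr rfl hmid, Finset.sum_Ico_eq_sum_range]
  have htel : ∑ x ∈ Finset.range (tIdx l k i - i),
      ((fun y => cSeq l y) (i + x) - (fun y => cSeq l y) (i + x + 1))
      = cSeq l i - cSeq l (tIdx l k i) := by
    have hcg : ∀ x ∈ Finset.range (tIdx l k i - i),
        (fun y => cSeq l y) (i + x) - (fun y => cSeq l y) (i + x + 1)
          = (fun y => cSeq l (i + y)) x - (fun y => cSeq l (i + y)) (x + 1) := by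
      intro x _
      show cSeq l (i + x) - cSeq l (i + x + 1) = cSeq l (i + x) - cSeq l (i + (x + 1))
      rw [Nat.add_assoc]
    rw [Finset.sum_congr rfl hcg, Finset.sum_range_sub' (fun x => cSeq l (i + x))]
    rw [show i + (tIdx l k i - i) = tIdx l k i by omega, show i + 0 = i by omega]
  rw [htel, fFun_tIdx hk hv]
  unfold vVal cSeq
  push_cast
  ring

lemma card_skew (hk : 0 < k) (hv : Valid l k i) :
    (l.cells \ (ribbonDiag l k i).cells).card = k := by
  have hle := ribbonDiag_le hk hv
  have h1 := card_sdiff_rows (ribbonDiag l k i) l hle (plen l) le_rfl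
  have h2 : ((l.cells \ (ribbonDiag l k i).cells).card : ℤ)
      = ∑ r ∈ Finset.range (plen l), ((l.rowLen r : ℤ) - ((ribbonDiag l k i).rowLen r : ℤ)) := by
    rw [h1, Nat.cast_sum]
    refine Finset.sum_congr rfl (fun r _ => ?_)
    have := rowLen_le_of_le hle r
    omega
  rw [Finset.sum_congr rfl
    (fun r _ => by rw [rowLen_ribbonDiag hk hv]), sum_skew_eq hk hv] at h2
  exact_mod_cast h2

lemma adjCell_symm {a b : ℕ × ℕ} (h : adjCell a b) : adjCell b a := by
  unfold adjCell at *
  tauto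

lemma relS_symm (S : Finset (ℕ × ℕ)) :
    Symmetric (fun a b => a ∈ S ∧ b ∈ S ∧ adjCell a b) := by
  intro a b ⟨h1, h2, h3⟩
  exact ⟨h2, h1, adjCell_symm h3⟩

lemma conn_row (hk : 0 < k) (hv : Valid l k i) {r : ℕ} (hri : i ≤ r) (hrt : r ≤ tIdx l k i) :
    ∀ x, fFun l k i r ≤ x → x < l.rowLen r →
      Relation.ReflTransGen
        (fun a b => a ∈ l.cells \ (ribbonDiag l k i).cells ∧
          b ∈ l.cells \ (ribbonDiag l k i).cells ∧ adjCell a b)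
        (r, fFun l k i r) (r, x) := by
  intro x hx1
  induction x, hx1 using Nat.le_induction with
  | base => intro _; exact Relation.ReflTransGen.refl
  | succ x hx ih =>
    intro hlt
    refine Relation.ReflTransGen.tail (ih (by omega)) ?_
    refine ⟨?_, ?_, ?_⟩
    · rw [mem_skew_iff hk hv]
      omega
    · rw [mem_skew_iff hk hv]
      omega
    · left
      exact ⟨rfl, Or.inr rfl⟩

lemma fFun_succ_row (hk : 0 < k) (hv : Valid l k i) {r : ℕ}
    (h1 : i ≤ r) (h2 : r < tIdx l k i) :
    fFun l k i r + 1 = l.rowLen (r + 1) := by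
  have htn := tIdx_lt_plen hv
  have hst := fFun_structure hk hv h1 h2
  have hpos : 0 < l.rowLen (r+1) := rowLen_pos_of_lt_plen l (by omega)
  omega

lemma conn_to_base (hk : 0 < k) (hv : Valid l k i) :
    ∀ r, i ≤ r → r ≤ tIdx l k i →
      Relation.ReflTransGen
        (fun a b => a ∈ l.cells \ (ribbonDiag l k i).cells ∧
          b ∈ l.cells \ (ribbonDiag l k i).cells ∧ adjCell a b)
        (i, fFun l k i i) (r, fFun l k i r) := by
  intro r hir
  induction r, hir using Nat.le_induction with
  | base => intro _; exact Relation.ReflTransGen.refl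
  | succ r hr ih =>
    intro hrt
    have h2 : r < tIdx l k i := by omega
    have hrow := fFun_succ_row hk hv hr h2
    have hmem1 : (r, fFun l k i r) ∈ l.cells \ (ribbonDiag l k i).cells := by
      rw [mem_skew_iff hk hv]
      exact ⟨le_refl _, fFun_lt_rowLen hk hv hr (by omega)⟩
    have hmem2 : (r + 1, fFun l k i r) ∈ l.cells \ (ribbonDiag l k i).cells := by
      rw [mem_skew_iff hk hv]
      have := fFun_anti hk hv r (r+1) (by omega)
      omega
    have hstep : Relation.ReflTransGen
        (fun a b => a ∈ l.cells \ (ribbonDiag l k i).cells ∧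
          b ∈ l.cells \ (ribbonDiag l k i).cells ∧ adjCell a b)
        (r, fFun l k i r) (r + 1, fFun l k i r) :=
      Relation.ReflTransGen.single ⟨hmem1, hmem2, Or.inr ⟨rfl, Or.inr rfl⟩⟩
    have hback := conn_row hk hv (show i ≤ r + 1 by omega) hrt (fFun l k i r)
      (fFun_anti hk hv r (r+1) (by omega)) (by omega)
    exact ((ih (by omega)).trans hstep).trans
      (@Std.Symm.symm _ _ (@Relation.ReflTransGen.symmetric _ _ ⟨relS_symm _⟩) _ _ hback)

lemma conn_skew (hk : 0 < k) (hv : Valid l k i) :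
    ConnCells (l.cells \ (ribbonDiag l k i).cells) := by
  intro c hc d hd
  obtain ⟨rc, xc⟩ := c
  obtain ⟨rd, xd⟩ := d
  have hcr := mem_skew_rows hk hv hc
  have hdr := mem_skew_rows hk hv hd
  have hcm := (mem_skew_iff hk hv rc xc).mp hc
  have hdm := (mem_skew_iff hk hv rd xd).mp hd
  have h1 : Relation.ReflTransGen _ (i, fFun l k i i) (rc, xc) :=
    (conn_to_base hk hv rc hcr.1 hcr.2).trans
      (conn_row hk hv hcr.1 hcr.2 xc hcm.1 hcm.2)
  have h2 : Relation.ReflTransGen _ (i, fFun l k i i) (rd, xd) :=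
    (conn_to_base hk hv rd hdr.1 hdr.2).trans
      (conn_row hk hv hdr.1 hdr.2 xd hdm.1 hdm.2)
  exact (@Std.Symm.symm _ _ (@Relation.ReflTransGen.symmetric _ _ ⟨relS_symm _⟩) _ _ h1).trans h2

lemma no_square (hk : 0 < k) (hv : Valid l k i) :
    ¬ ∃ a b : ℕ, ((a, b) ∈ l.cells \ (ribbonDiag l k i).cells ∧
      (a + 1, b) ∈ l.cells \ (ribbonDiag l k i).cells ∧
      (a, b + 1) ∈ l.cells \ (ribbonDiag l k i).cells ∧
      (a + 1, b + 1) ∈ l.cells \ (ribbonDiag l k i).cells) := by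
  rintro ⟨a, b, h1, h2, _, h4⟩
  have hr1 := mem_skew_rows hk hv h1
  have hr2 := mem_skew_rows hk hv h2
  have hst := fFun_structure hk hv hr1.1 (show a < tIdx l k i by omega)
  have hm1 := (mem_skew_iff hk hv _ _).mp h1
  have hm4 := (mem_skew_iff hk hv _ _).mp h4
  omega

lemma image_fst_skew (hk : 0 < k) (hv : Valid l k i) :
    (l.cells \ (ribbonDiag l k i).cells).image Prod.fst = Finset.Icc i (tIdx l k i) := by
  ext r
  simp only [Finset.mem_image, Finset.mem_Icc]
  constructor
  · rintro ⟨p, hp, rfl⟩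
    obtain ⟨a, b⟩ := p
    exact mem_skew_rows hk hv hp
  · rintro ⟨h1, h2⟩
    refine ⟨(r, fFun l k i r), ?_, rfl⟩
    rw [mem_skew_iff hk hv]
    exact ⟨le_refl _, fFun_lt_rowLen hk hv h1 h2⟩

lemma height_skew (hk : 0 < k) (hv : Valid l k i) :
    ribbonHeight (ribbonDiag l k i) l = tIdx l k i - i := by
  unfold ribbonHeight
  rw [image_fst_skew hk hv, Nat.card_Icc]
  have := tIdx_ge hk hv
  omega

lemma isRibbon_ribbonDiag (hk : 0 < k) (hv : Valid l k i) :
    IsRibbon (ribbonDiag l k i) l k :=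
  ⟨ribbonDiag_le hk hv, card_skew hk hv, conn_skew hk hv, no_square hk hv⟩

lemma sF_ribbonDiag (hk : 0 < k) (hv : Valid l k i) :
    sF (ribbonDiag l k i) = Jdet (plen l) (cmSeq l k i) := by
  rw [sF_eq_Jdet]
  have hplen : plen (ribbonDiag l k i) ≤ plen l := by
    apply plen_le_of_rowLen_zero
    rw [rowLen_ribbonDiag hk hv, fFun_zero hv (le_refl _)]
  have htrail := Jdet_trailing (plen (ribbonDiag l k i)) (plen l) hplen
    (fun r => ((ribbonDiag l k i).rowLen r : ℤ) - r)
    (fun r hr _ => by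
      show ((ribbonDiag l k i).rowLen r : ℤ) - r = -(r:ℤ)
      rw [rowLen_eq_zero_of_plen_le _ hr]
      simp)
  rw [← htrail]
  apply Jdet_congr
  intro r hr
  rw [rowLen_ribbonDiag hk hv]
  have := fFun_cast hk hv hr
  omega

lemma Jdet_update_valid (hk : 0 < k) (hv : Valid l k i) :
    Jdet (plen l) (Function.update (cSeq l) i (vVal l k i))
      = (-1 : ℂ) ^ (tIdx l k i - i) • sF (ribbonDiag l k i) := by
  rw [Jdet_move (plen l) (cSeq l) (vVal l k i) i (tIdx l k i) (tIdx_ge hk hv)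
    (tIdx_lt_plen hv), sF_ribbonDiag hk hv]
  rfl

lemma Jdet_update_invalid (hk : 0 < k) {i : ℕ} (hi : i < plen l) (hnv : ¬ Valid l k i) :
    Jdet (plen l) (Function.update (cSeq l) i (vVal l k i)) = 0 := by
  unfold Valid at hnv
  push_neg at hnv
  by_cases hb : (-(plen l : ℤ) < vVal l k i)
  · obtain ⟨j, hj, hjv⟩ := hnv hi hb
    have hji : j ≠ i := by
      intro h
      rw [h] at hjv
      unfold vVal at hjv
      omega
    apply Jdet_eq_zero_of_eq (i := (⟨j, hj⟩ : Fin (plen l))) (j := (⟨i, hi⟩ : Fin (plen l)))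
      (Fin.ne_of_val_ne hji)
    show Function.update (cSeq l) i (vVal l k i) j = Function.update (cSeq l) i (vVal l k i) i
    rw [Function.update_of_ne hji, Function.update_self]
    exact hjv
  · push_neg at hb
    apply Jdet_eq_zero_of_neg (i := (⟨i, hi⟩ : Fin (plen l)))
    show Function.update (cSeq l) i (vVal l k i) i + (plen l : ℤ) ≤ 0
    rw [Function.update_self]
    omega

lemma ribbonDiag_ne (hk : 0 < k) {i j : ℕ} (hvi : Valid l k i) (hvj : Valid l k j)
    (hij : i < j) : ribbonDiag l k i ≠ ribbonDiag l k j := by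
  intro h
  have h1 : (ribbonDiag l k i).rowLen i < l.rowLen i :=
    (rowLen_ribbonDiag hk hvi i).symm ▸ fFun_lt_rowLen hk hvi (le_refl i) (tIdx_ge hk hvi)
  have h2 : (ribbonDiag l k j).rowLen i = l.rowLen i := by
    rw [rowLen_ribbonDiag hk hvj]
    exact fFun_eq_rowLen hk hvj (Or.inl hij)
  rw [h, h2] at h1
  omega

lemma LHS_eq (l : YoungDiagram) (k : ℕ) (hk : 0 < k) :
    (k:ℂ) • pderivK k (sF l) =
      ∑ i ∈ Finset.filter (fun i => Valid l k i) (Finset.range (plen l)),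
        (-1:ℂ) ^ (tIdx l k i - i) • sF (ribbonDiag l k i) := by
  classical
  have hsF : sF l = Jdet (plen l) (cSeq l) := sF_eq_Jdet l
  rw [hsF, k_smul_pderivK_Jdet k (plen l) (cSeq l) hk]
  rw [Fin.sum_univ_eq_sum_range
    (fun i => Jdet (plen l) (Function.update (cSeq l) i (cSeq l i - (k:ℤ))))]
  rw [← Finset.sum_filter_of_ne (p := fun i => Valid l k i) (fun i hi hne => by
    by_contra hnv
    exact hne (Jdet_update_invalid hk (Finset.mem_range.mp hi) hnv))]
  exact Finset.sum_congr rfl (fun i hi => Jdet_update_valid hk (Finset.mem_filter.mp hi).2)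

end valid2
/-! ### Section 7: every ribbon arises from a valid index -/

lemma adjCell_row_le {m c : ℕ × ℕ} (h : adjCell m c) : c.1 ≤ m.1 + 1 := by
  rcases h with ⟨h1, _⟩ | ⟨_, h2 | h2⟩ <;> omega

lemma cross_row {S : Finset (ℕ × ℕ)} {r : ℕ} {a b : ℕ × ℕ}
    (h : Relation.ReflTransGen (fun x y => x ∈ S ∧ y ∈ S ∧ adjCell x y) a b)
    (ha : a ∈ S) (har : a.1 ≤ r) (hbr : r ≤ b.1) : ∃ p ∈ S, p.1 = r := by
  revert hbr
  induction h with
  | refl => exact fun hbr => ⟨a, ha, by omega⟩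
  | @tail m c ham hmc ih =>
    intro hrc
    rcases le_or_gt r m.1 with h1 | h1
    · exact ih h1
    · have hc1 : c.1 ≤ m.1 + 1 := adjCell_row_le hmc.2.2
      exact ⟨c, hmc.2.1, by omega⟩

lemma cross_vert {S : Finset (ℕ × ℕ)} {r : ℕ} {a b : ℕ × ℕ}
    (h : Relation.ReflTransGen (fun x y => x ∈ S ∧ y ∈ S ∧ adjCell x y) a b)
    (har : a.1 ≤ r) (hbr : b.1 = r + 1) :
    ∃ x, (r, x) ∈ S ∧ (r + 1, x) ∈ S := by
  have key : b.1 ≤ r ∨ ∃ x, (r, x) ∈ S ∧ (r + 1, x) ∈ S := by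
    clear hbr
    induction h with
    | refl => exact Or.inl har
    | @tail m c ham hmc ih =>
      rcases ih with h1 | h1
      · rcases le_or_gt c.1 r with h2 | h2
        · exact Or.inl h2
        · right
          have hc1 : c.1 ≤ m.1 + 1 := adjCell_row_le hmc.2.2
          have hm1 : m.1 = r := by omega
          have hcc : c.1 = r + 1 := by omega
          have hvert : m.2 = c.2 := by
            rcases hmc.2.2 with ⟨h3, _⟩ | ⟨h3, _⟩
            · omega
            · exact h3
          refine ⟨m.2, ?_, ?_⟩
          · have hmm := hmc.1
            have : (r, m.2) = m := by rw [← hm1]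
            rwa [this]
          · have hcm := hmc.2.1
            have : (r + 1, m.2) = c := by rw [hvert, ← hcc]
            rwa [this]
      · exact Or.inr h1
  rcases key with h1 | h1
  · omega
  · exact h1

lemma exists_valid_of_isRibbon {l μ : YoungDiagram} {k : ℕ} (hk : 0 < k)
    (hR : IsRibbon μ l k) : ∃ i, Valid l k i ∧ μ = ribbonDiag l k i := by
  classical
  obtain ⟨hle, hcard, hconn, hsq⟩ := hR
  have hmemS : ∀ r x : ℕ, ((r, x) ∈ l.cells \ μ.cells ↔ μ.rowLen r ≤ x ∧ x < l.rowLen r) := by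
    intro r x
    rw [Finset.mem_sdiff, YoungDiagram.mem_cells, YoungDiagram.mem_cells,
      YoungDiagram.mem_iff_lt_rowLen, YoungDiagram.mem_iff_lt_rowLen]
    omega
  have hne : (l.cells \ μ.cells).Nonempty := by
    rw [← Finset.card_pos, hcard]
    exact hk
  have hI : ((l.cells \ μ.cells).image Prod.fst).Nonempty := hne.image _
  set i0 := ((l.cells \ μ.cells).image Prod.fst).min' hI with hi0def
  set t0 := ((l.cells \ μ.cells).image Prod.fst).max' hI with ht0def
  have hi0t0 : i0 ≤ t0 := Finset.min'_le _ _ (Finset.max'_mem _ hI)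
  have hrowI : ∀ r : ℕ, μ.rowLen r < l.rowLen r →
      r ∈ (l.cells \ μ.cells).image Prod.fst := by
    intro r hr
    exact Finset.mem_image.mpr ⟨(r, μ.rowLen r), (hmemS r _).mpr ⟨le_refl _, hr⟩, rfl⟩
  have heqout : ∀ r : ℕ, (r < i0 ∨ t0 < r) → μ.rowLen r = l.rowLen r := by
    intro r hr
    have h1 := rowLen_le_of_le hle r
    rcases Nat.eq_or_lt_of_le h1 with h2 | h2
    · exact h2
    · exfalso
      have hrI := hrowI r h2
      have := Finset.min'_le _ _ hrI
      have := Finset.le_max' _ _ hrI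
      omega
  -- cells in extreme rows
  obtain ⟨pa, hpa, hpa1⟩ := Finset.mem_image.mp (Finset.min'_mem _ hI)
  obtain ⟨pb, hpb, hpb1⟩ := Finset.mem_image.mp (Finset.max'_mem _ hI)
  have hoccin : ∀ r : ℕ, i0 ≤ r → r ≤ t0 → μ.rowLen r < l.rowLen r := by
    intro r h1 h2
    have hpath := hconn pa hpa pb hpb
    obtain ⟨p, hp, hp1⟩ := cross_row (r := r) hpath hpa (by omega) (by omega)
    obtain ⟨pr, px⟩ := p
    have h3 := (hmemS pr px).mp hp
    have hpr : pr = r := hp1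
    subst hpr
    omega
  have hover : ∀ r : ℕ, i0 ≤ r → r < t0 → μ.rowLen r < l.rowLen (r + 1) := by
    intro r h1 h2
    have hm1 : (r, μ.rowLen r) ∈ l.cells \ μ.cells :=
      (hmemS _ _).mpr ⟨le_refl _, hoccin r h1 (by omega)⟩
    have hm2 : (r + 1, μ.rowLen (r+1)) ∈ l.cells \ μ.cells :=
      (hmemS _ _).mpr ⟨le_refl _, hoccin (r+1) (by omega) (by omega)⟩
    have hpath := hconn _ hm1 _ hm2
    obtain ⟨x, hx1, hx2⟩ := cross_vert hpath (by omega) rfl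
    have h3 := (hmemS _ _).mp hx1
    have h4 := (hmemS _ _).mp hx2
    omega
  have hstep : ∀ r : ℕ, i0 ≤ r → r < t0 → μ.rowLen r + 1 = l.rowLen (r + 1) := by
    intro r h1 h2
    have h3 := hover r h1 h2
    rcases Nat.lt_or_ge (μ.rowLen r + 1) (l.rowLen (r+1)) with h4 | h4
    · exfalso
      apply hsq
      refine ⟨r, μ.rowLen r, ?_, ?_, ?_, ?_⟩
      · exact (hmemS _ _).mpr ⟨le_refl _, hoccin r h1 (by omega)⟩
      · have := μ.rowLen_anti r (r+1) (by omega)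
        exact (hmemS _ _).mpr ⟨by omega, by omega⟩
      · have := l.rowLen_anti r (r+1) (by omega)
        exact (hmemS _ _).mpr ⟨by omega, by omega⟩
      · have := μ.rowLen_anti r (r+1) (by omega)
        exact (hmemS _ _).mpr ⟨by omega, by omega⟩
    · omega
  have ht0n : t0 < plen l := by
    by_contra hc
    have h1 := rowLen_eq_zero_of_plen_le l (show plen l ≤ t0 by omega)
    have := hoccin t0 hi0t0 (le_refl _)
    omega
  -- the sum identity
  have hcast : ∑ r ∈ Finset.range (plen l), (cSeq l r - cSeq μ r) = (k:ℤ) := by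
    have h1 := card_sdiff_rows μ l hle (plen l) le_rfl
    rw [hcard] at h1
    have h2 : ((k:ℕ):ℤ) = ∑ r ∈ Finset.range (plen l),
        ((l.rowLen r : ℤ) - (μ.rowLen r : ℤ)) := by
      rw [h1, Nat.cast_sum]
      refine Finset.sum_congr rfl (fun r _ => ?_)
      have := rowLen_le_of_le hle r
      omega
    rw [Finset.sum_congr rfl (fun r _ =>
      show cSeq l r - cSeq μ r = (l.rowLen r : ℤ) - (μ.rowLen r : ℤ) by unfold cSeq; ring)]
    exact h2.symm
  have hμt0 : cSeq μ t0 = cSeq l i0 - (k:ℤ) := by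
    have hsub : ∑ r ∈ Finset.range (plen l), (cSeq l r - cSeq μ r)
        = ∑ r ∈ Finset.Ico i0 (t0 + 1), (cSeq l r - cSeq μ r) := by
      rw [← Finset.sum_subset (s₁ := Finset.Ico i0 (t0 + 1))
        (fun r hr => by rw [Finset.mem_Ico] at hr; exact Finset.mem_range.mpr (by omega))
        (fun r hr hnot => by
          rw [Finset.mem_Ico] at hnot
          have : μ.rowLen r = l.rowLen r := heqout r (by omega)
          unfold cSeq
          omega)]
    have hmid : ∀ r ∈ Finset.Ico i0 t0, (cSeq l r - cSeq μ r)
        = (fun y => cSeq l (i0 + y)) (r - i0) - (fun y => cSeq l (i0 + y)) (r - i0 + 1) := by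
      intro r hr
      rw [Finset.mem_Ico] at hr
      have h1 := hstep r hr.1 hr.2
      show cSeq l r - cSeq μ r = cSeq l (i0 + (r - i0)) - cSeq l (i0 + (r - i0 + 1))
      rw [show i0 + (r - i0) = r by omega, show i0 + (r - i0 + 1) = r + 1 by omega]
      unfold cSeq
      omega
    rw [hsub, Finset.sum_Ico_succ_top (by omega), Finset.sum_congr rfl hmid] at hcast
    have hre : ∑ r ∈ Finset.Ico i0 t0,
        ((fun y => cSeq l (i0 + y)) (r - i0) - (fun y => cSeq l (i0 + y)) (r - i0 + 1))
        = ∑ x ∈ Finset.range (t0 - i0),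
          ((fun y => cSeq l (i0 + y)) x - (fun y => cSeq l (i0 + y)) (x + 1)) := by
      rw [Finset.sum_Ico_eq_sum_range]
      refine Finset.sum_congr rfl (fun x _ => ?_)
      rw [show i0 + x - i0 = x by omega]
    rw [hre, Finset.sum_range_sub' (fun x => cSeq l (i0 + x))] at hcast
    rw [show i0 + 0 = i0 by omega, show i0 + (t0 - i0) = t0 by omega] at hcast
    omega
  -- validity of i0
  have hcm_lt : cSeq μ t0 < cSeq l t0 := by
    have := hoccin t0 hi0t0 (le_refl _)
    unfold cSeq
    omega
  have hvv : vVal l k i0 = cSeq μ t0 := by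
    unfold vVal
    omega
  have hshift : ∀ j : ℕ, i0 < j → j ≤ t0 → cSeq μ (j - 1) = cSeq l j := by
    intro j h1 h2
    have h3 := hstep (j-1) (by omega) (by omega)
    rw [show j - 1 + 1 = j by omega] at h3
    unfold cSeq
    have : (j : ℤ) - 1 = ((j - 1 : ℕ) : ℤ) := by omega
    omega
  have hvalid : Valid l k i0 := by
    refine ⟨by omega, ?_, ?_⟩
    · rw [hvv]
      unfold cSeq
      omega
    · intro j hj heq
      rw [hvv] at heq
      rcases Nat.lt_or_ge j i0 with h1 | h1
      · have h2 : cSeq μ j = cSeq l j := by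
          have := heqout j (Or.inl h1)
          unfold cSeq
          omega
      -- cSeq μ j = cSeq μ t0 with j < t0
        have := cSeq_strict μ (show j < t0 by omega)
        omega
      · rcases Nat.eq_or_lt_of_le h1 with heq | h2
        · subst heq
          unfold vVal at hvv
          omega
        · rcases le_or_gt j t0 with h3 | h3
          · have h4 := hshift j h2 h3
            have h5 : j - 1 < t0 := by omega
            have := cSeq_strict μ h5
            omega
          · have h4 : cSeq μ j = cSeq l j := by
              have := heqout j (Or.inr h3)
              unfold cSeq
              omega
            have := cSeq_strict μ h3
            omega
  have htIdx : tIdx l k i0 = t0 := by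
    unfold tIdx
    rw [Nat.findGreatest_eq_iff]
    refine ⟨by omega, fun _ => by omega, ?_⟩
    intro s hs1 hs2
    have hs3 : s < plen l := by omega
    have h4 : cSeq μ s = cSeq l s := by
      have := heqout s (Or.inr hs1)
      unfold cSeq
      omega
    have := cSeq_strict μ (show t0 < s by omega)
    omega
  refine ⟨i0, hvalid, ?_⟩
  apply yd_eq_of_rowLen_eq
  intro r
  rw [rowLen_ribbonDiag hk hvalid]
  rcases Nat.lt_or_ge r i0 with h1 | h1
  · rw [fFun_eq_rowLen hk hvalid (Or.inl h1)]
    exact heqout r (Or.inl h1)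
  · rcases Nat.lt_or_ge r t0 with h2 | h2
    · have h3 := fFun_structure hk hvalid h1 (by omega)
      have h4 := hstep r h1 h2
      omega
    · rcases Nat.eq_or_lt_of_le h2 with heq | h3
      · have h4 := fFun_tIdx hk hvalid
        rw [htIdx] at h4
        rw [hvv] at h4
        have h5 : (μ.rowLen t0 : ℤ) = cSeq μ t0 + t0 := by unfold cSeq; ring
        rw [← heq]
        omega
      · rw [fFun_eq_rowLen hk hvalid (Or.inr (by omega))]
        exact heqout r (Or.inr h3)
/-- **Dual Murnaghan–Nakayama rule** (Corollary 3.3): in the ring of symmetric functions,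
`k ∂/∂p_k s_λ = ∑_{μ →_k λ} (-1)^{ht(λ∖μ)} s_μ`. -/
theorem dual_MN (l : YoungDiagram) (k : ℕ) (hk : 0 < k) :
    (k : ℂ) • pderivK k (sF l) =
      ∑ᶠ μ : YoungDiagram,
        if IsRibbon μ l k then ((-1 : ℂ) ^ ribbonHeight μ l) • sF μ else 0 := by
  classical
  have hsupp : Function.support (fun μ : YoungDiagram =>
      if IsRibbon μ l k then ((-1 : ℂ) ^ ribbonHeight μ l) • sF μ else 0)
      ⊆ (((Finset.filter (fun i => Valid l k i) (Finset.range (plen l))).image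
          (fun i => ribbonDiag l k i)) : Finset YoungDiagram) := by
    intro μ hμ
    rw [Function.mem_support] at hμ
    by_cases hR : IsRibbon μ l k
    · obtain ⟨i, hvi, rfl⟩ := exists_valid_of_isRibbon hk hR
      simp only [Finset.coe_image, Set.mem_image, Finset.mem_coe]
      exact ⟨i, Finset.mem_filter.mpr ⟨Finset.mem_range.mpr hvi.1, hvi⟩, rfl⟩
    · simp only [if_neg hR] at hμ
      exact absurd rfl hμ
  rw [finsum_eq_finset_sum_of_support_subset _ hsupp]
  rw [Finset.sum_image (fun i hi j hj hij => by
    have hvi := (Finset.mem_filter.mp hi).2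
    have hvj := (Finset.mem_filter.mp hj).2
    rcases lt_trichotomy i j with h | h | h
    · exact absurd hij (ribbonDiag_ne hk hvi hvj h)
    · exact h
    · exact absurd hij.symm (ribbonDiag_ne hk hvj hvi h))]
  rw [LHS_eq l k hk]
  refine Finset.sum_congr rfl (fun i hi => ?_)
  have hvi := (Finset.mem_filter.mp hi).2
  rw [if_pos (isRibbon_ribbonDiag hk hvi), height_skew hk hvi]
end RMT
end
end

section
/- Let g be an N×N unitary matrix with det(−g) ≠ −1. Then: (1) for all z ∈ ℂ ∖ ℝ_{≤0}, Λ_g(z) = Λ_{g^{-1}}(z^{-1}); and (2) for all z ∈ ℂ ∖ ℝ_{≤0} that are not eigenvalues of g, z·Λ'_g(z)/Λ_g(z) = −z^{-1}·Λ'_{g^{-1}}(z^{-1})/Λ_{g^{-1}}(z^{-1}). -/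
open scoped BigOperators
open MeasureTheory

noncomputable section

namespace RMT

attribute [local instance] Classical.propDecidable

/-- Membership in the slit plane from the cut-set formulation. -/
lemma mem_slit_of_not_cut {z : ℂ} (h : z ∉ {w : ℂ | w.im = 0 ∧ w.re ≤ 0}) :
    z ∈ Complex.slitPlane := by
  rw [Complex.mem_slitPlane_iff]
  simp only [Set.mem_setOf_eq, not_and, not_le] at h
  by_cases him : z.im = 0
  · exact Or.inl (h him)
  · exact Or.inr him

/-- The slit plane is closed under inversion. -/
lemma inv_mem_slit {z : ℂ} (h : z ∈ Complex.slitPlane) : z⁻¹ ∈ Complex.slitPlane := by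
  have hz : z ≠ 0 := Complex.slitPlane_ne_zero h
  have hn : 0 < Complex.normSq z := Complex.normSq_pos.mpr hz
  rw [Complex.mem_slitPlane_iff] at h ⊢
  rcases h with h | h
  · exact Or.inl (by rw [Complex.inv_re]; positivity)
  · refine Or.inr ?_
    rw [Complex.inv_im, neg_div]
    exact neg_ne_zero.mpr (div_ne_zero h hn.ne')

/-- `chi g` agrees with the evaluation of a polynomial. -/
lemma chi_polynomial {N : ℕ} (g : UG N) : ∃ q : Polynomial ℂ, ∀ z : ℂ, chi g z = q.eval z := by
  classical
  set B : Matrix (Fin N) (Fin N) ℂ := ((g⁻¹ : UG N) : Matrix (Fin N) (Fin N) ℂ)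
  refine ⟨Matrix.det (Matrix.of fun i j =>
    (if i = j then 1 else 0) - Polynomial.C (B i j) * Polynomial.X), fun z => ?_⟩
  have h : chi g z = (((Polynomial.evalRingHom z).mapMatrix) (Matrix.of fun i j =>
      (if i = j then 1 else 0) - Polynomial.C (B i j) * Polynomial.X)).det := by
    unfold chi
    congr 1
    ext i j
    simp only [RingHom.mapMatrix_apply, Matrix.map_apply, Matrix.of_apply,
      Polynomial.coe_evalRingHom, Polynomial.eval_sub, Polynomial.eval_mul, Polynomial.eval_C,
      Polynomial.eval_X, apply_ite (Polynomial.eval z), Polynomial.eval_one, Polynomial.eval_zero,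
      Matrix.sub_apply, Matrix.smul_apply, Matrix.one_apply, smul_eq_mul, B]
    rw [mul_comm]
  rw [h, ← RingHom.map_det]
  rfl

/-- `chi g` is differentiable. -/
lemma chi_differentiable {N : ℕ} (g : UG N) : Differentiable ℂ (chi g) := by
  obtain ⟨q, hq⟩ := chi_polynomial g
  have : chi g = fun z => q.eval z := funext hq
  rw [this]
  exact q.differentiable

/-- `Lam g` is differentiable on the slit plane. -/
lemma lam_differentiableAt {N : ℕ} (g : UG N) {z : ℂ} (hz : z ∈ Complex.slitPlane) :
    DifferentiableAt ℂ (Lam g) z := by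
  have h1 : DifferentiableAt ℂ (fun w : ℂ => w ^ (-(N : ℂ) / 2)) z :=
    (Complex.hasStrictDerivAt_cpow_const hz).hasDerivAt.differentiableAt
  exact ((differentiableAt_const _).mul h1).mul (chi_differentiable g z)

/-- The key relation between `chi g⁻¹ z⁻¹` and `chi g z`. -/
lemma chi_inv_rel {N : ℕ} (g : UG N) {z : ℂ} (hz : z ≠ 0) :
    chi g⁻¹ z⁻¹ = (-z⁻¹) ^ N * Matrix.det (g : Matrix (Fin N) (Fin N) ℂ) * chi g z := by
  set A : Matrix (Fin N) (Fin N) ℂ := (g : Matrix (Fin N) (Fin N) ℂ)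
  set B : Matrix (Fin N) (Fin N) ℂ := ((g⁻¹ : UG N) : Matrix (Fin N) (Fin N) ℂ)
  have hB : B = star A := rfl
  have hAB : A * B = 1 := by rw [hB]; exact g.2.2
  have key : (1 : Matrix (Fin N) (Fin N) ℂ) - z⁻¹ • A = ((-z⁻¹) • A) * (1 - z • B) := by
    rw [Matrix.mul_sub, Matrix.mul_one, Matrix.smul_mul, Matrix.mul_smul, hAB, smul_smul]
    rw [show -z⁻¹ * z = (-1 : ℂ) by field_simp]
    rw [neg_one_smul, sub_neg_eq_add, neg_smul]
    abel
  have : chi g⁻¹ z⁻¹ = Matrix.det ((1 : Matrix (Fin N) (Fin N) ℂ) - z⁻¹ • A) := by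
    simp only [chi, inv_inv]
    rfl
  rw [this, key, Matrix.det_mul, Matrix.det_smul]
  simp only [chi, Fintype.card_fin, smul_eq_mul]
  rfl

/-- `detNeg g` lies on the unit circle. -/
lemma detNeg_star_mul {N : ℕ} (g : UG N) : (starRingEnd ℂ) (detNeg g) * detNeg g = 1 := by
  have h : star (Matrix.det (g : Matrix (Fin N) (Fin N) ℂ)) *
      Matrix.det (g : Matrix (Fin N) (Fin N) ℂ) = 1 := (Matrix.det_of_mem_unitary g.2).1
  rw [Complex.star_def] at h
  have hsq : ((-1 : ℂ) ^ N) * ((-1 : ℂ) ^ N) = 1 := by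
    rcases Nat.even_or_odd N with h | h
    · rw [h.neg_one_pow]; norm_num
    · rw [h.neg_one_pow]; norm_num
  simp only [detNeg, Matrix.det_neg, Fintype.card_fin, map_mul, map_pow, map_neg, map_one]
  calc ((-1 : ℂ) ^ N * (starRingEnd ℂ) (Matrix.det (g : Matrix (Fin N) (Fin N) ℂ))) *
      ((-1 : ℂ) ^ N * Matrix.det (g : Matrix (Fin N) (Fin N) ℂ)) =
      (((-1 : ℂ) ^ N) * ((-1 : ℂ) ^ N)) *
        ((starRingEnd ℂ) (Matrix.det (g : Matrix (Fin N) (Fin N) ℂ)) *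
          Matrix.det (g : Matrix (Fin N) (Fin N) ℂ)) := by ring
    _ = 1 := by rw [hsq, h, one_mul]

lemma detNeg_ne_zero {N : ℕ} (g : UG N) : detNeg g ≠ 0 := by
  intro h
  have := detNeg_star_mul g
  rw [h, mul_zero] at this
  exact zero_ne_one this

lemma detNeg_inv {N : ℕ} (g : UG N) : detNeg g⁻¹ = (detNeg g)⁻¹ := by
  have h1 : detNeg g⁻¹ = (starRingEnd ℂ) (detNeg g) := by
    simp only [detNeg]
    have : ((g⁻¹ : UG N) : Matrix (Fin N) (Fin N) ℂ) = star (g : Matrix (Fin N) (Fin N) ℂ) :=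
      rfl
    rw [this, ← star_neg, Matrix.star_eq_conjTranspose, Matrix.det_conjTranspose]
    rfl
  rw [h1]
  exact (inv_eq_of_mul_eq_one_left (detNeg_star_mul g)).symm

lemma detNeg_mem_slit {N : ℕ} (g : UG N) (hdet : detNeg g ≠ -1) :
    detNeg g ∈ Complex.slitPlane := by
  set d := detNeg g with hd
  by_contra h
  rw [Complex.mem_slitPlane_iff] at h
  push_neg at h
  obtain ⟨hre, him⟩ := h
  have hd1 : (starRingEnd ℂ) d * d = 1 := detNeg_star_mul g
  have hreal : d = (d.re : ℂ) := Complex.ext rfl (by simpa using him)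
  rw [hreal] at hd1
  rw [Complex.conj_ofReal, ← Complex.ofReal_mul, ← Complex.ofReal_one] at hd1
  have h2 : d.re * d.re = 1 := by exact_mod_cast hd1
  have h3 : d.re = -1 := by nlinarith
  apply hdet
  rw [hreal, h3]
  norm_num

/-- **Functional equation for completed characteristic polynomials** (Lemma 5.2). -/
theorem functional_equation (N : ℕ) (hN : 0 < N) (g : UG N) (hdet : detNeg g ≠ -1) :
    (∀ z : ℂ, z ∉ {w : ℂ | w.im = 0 ∧ w.re ≤ 0} → Lam g z = Lam g⁻¹ z⁻¹) ∧
    (∀ z : ℂ, z ∉ {w : ℂ | w.im = 0 ∧ w.re ≤ 0} →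
      Matrix.det ((g : Matrix (Fin N) (Fin N) ℂ) - z • (1 : Matrix (Fin N) (Fin N) ℂ)) ≠ 0 →
      z * LamD g z / Lam g z = -(z⁻¹ * LamD g⁻¹ z⁻¹ / Lam g⁻¹ z⁻¹)) := by
  set d := detNeg g with hd
  have hd0 : d ≠ 0 := detNeg_ne_zero g
  have hdslit : d ∈ Complex.slitPlane := detNeg_mem_slit g hdet
  have hdarg : d.arg ≠ Real.pi := Complex.slitPlane_arg_ne_pi hdslit
  -- Part 1, stated for slit-plane membership
  have part1 : ∀ z : ℂ, z ∈ Complex.slitPlane → Lam g z = Lam g⁻¹ z⁻¹ := by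
    intro z hz
    have hz0 : z ≠ 0 := Complex.slitPlane_ne_zero hz
    have hzarg : z.arg ≠ Real.pi := Complex.slitPlane_arg_ne_pi hz
    have hchi := chi_inv_rel g hz0
    have hdet_eq : (-z⁻¹) ^ N * Matrix.det (g : Matrix (Fin N) (Fin N) ℂ) = (z ^ N)⁻¹ * d := by
      rw [hd, detNeg, Matrix.det_neg, Fintype.card_fin]
      rw [show (-z⁻¹ : ℂ) ^ N = (-1) ^ N * (z ^ N)⁻¹ by
        rw [neg_pow, inv_pow]]
      ring
    -- abbreviations
    set a : ℂ := d ^ ((1 : ℂ) / 2) with ha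
    set b : ℂ := z ^ ((N : ℂ) / 2) with hb
    have ha0 : a ≠ 0 := by
      rw [ha, Ne, Complex.cpow_eq_zero_iff]
      tauto
    have hb0 : b ≠ 0 := by
      rw [hb, Ne, Complex.cpow_eq_zero_iff]
      tauto
    have haa : a * a = d := by
      rw [ha, ← Complex.cpow_add _ _ hd0]
      norm_num
    have hbb : b * b = z ^ N := by
      rw [hb, ← Complex.cpow_add _ _ hz0]
      rw [show (N : ℂ) / 2 + (N : ℂ) / 2 = ((N : ℕ) : ℂ) by ring]
      exact Complex.cpow_natCast z N
    have hdinv : detNeg g⁻¹ ^ ((1 : ℂ) / 2) = a⁻¹ := by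
      rw [detNeg_inv, ← hd, Complex.inv_cpow _ _ hdarg, ha]
    have hzinv : (z⁻¹ : ℂ) ^ (-(N : ℂ) / 2) = b := by
      rw [Complex.inv_cpow _ _ hzarg, neg_div, Complex.cpow_neg, inv_inv, hb]
    have hzc : z ^ (-(N : ℂ) / 2) = b⁻¹ := by
      rw [neg_div, Complex.cpow_neg, hb]
    unfold Lam
    rw [hchi, hdet_eq, hdinv, hzinv, hzc, ← hd, ← ha]
    rw [← haa, ← hbb]
    have hzN : (b * b : ℂ) ≠ 0 := mul_ne_zero hb0 hb0
    field_simp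
  constructor
  · intro z hz
    exact part1 z (mem_slit_of_not_cut hz)
  · intro z hz _
    have hzs : z ∈ Complex.slitPlane := mem_slit_of_not_cut hz
    have hz0 : z ≠ 0 := Complex.slitPlane_ne_zero hzs
    have hzinv : z⁻¹ ∈ Complex.slitPlane := inv_mem_slit hzs
    have hdiff : DifferentiableAt ℂ (Lam g⁻¹) z⁻¹ := lam_differentiableAt g⁻¹ hzinv
    have hinv : HasDerivAt (fun w : ℂ => w⁻¹) (-(z ^ 2)⁻¹) z := hasDerivAt_inv hz0
    have hcomp : HasDerivAt (fun w : ℂ => Lam g⁻¹ w⁻¹)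
        (deriv (Lam g⁻¹) z⁻¹ * (-(z ^ 2)⁻¹)) z := hdiff.hasDerivAt.comp z hinv
    have heq : Lam g =ᶠ[nhds z] fun w : ℂ => Lam g⁻¹ w⁻¹ := by
      filter_upwards [Complex.isOpen_slitPlane.mem_nhds hzs] with w hw
      exact part1 w hw
    have hL : HasDerivAt (Lam g) (deriv (Lam g⁻¹) z⁻¹ * (-(z ^ 2)⁻¹)) z :=
      hcomp.congr_of_eventuallyEq heq
    have hLD : LamD g z = deriv (Lam g⁻¹) z⁻¹ * (-(z ^ 2)⁻¹) := hL.deriv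
    have hL2 : LamD g⁻¹ z⁻¹ = deriv (Lam g⁻¹) z⁻¹ := rfl
    rw [hLD, hL2, part1 z hzs]
    rw [show z * (deriv (Lam g⁻¹) z⁻¹ * (-(z ^ 2)⁻¹)) = -(z⁻¹ * deriv (Lam g⁻¹) z⁻¹) by
      field_simp]
    rw [neg_div]

end RMT
end
end
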